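/- arXiv:2002.03584 — 4 statements merged into one kernel-verified Lean document; each statement's English description precedes it below -/
import Mathlib

section
/- For every edge weight m₁ satisfying ∑_{uv∈E} m₁(uv)d(uv)² = D², we have δ(G,m₀,d) ≥ 1 − (D²/M)/λ₁(G,(m₀,m₁)), where δ(G,m₀,d) is the infimum of ‖bar(φ)‖² over all φ: V → ℝ^{|V|} with ∑_{u∈V} m₀(u)‖φ(u)‖² = M and ‖φ(u)−φ(v)‖ ≤ d(uv) for all edges uv. -/
open Finset
open scoped Classical

/-- The weighted graph Laplacian `(Δf)(u) = (1/m₀(u))[(∑_{v∼u} m₁(uv)) f(u) − ∑_{v∼u} m₁(uv) f(v)]`. -/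
noncomputable def lapl {V : Type*} [Fintype V] (G : SimpleGraph V) [DecidableRel G.Adj]
    (m0 : V → ℝ) (m1 : Sym2 V → ℝ) (f : V → ℝ) : V → ℝ :=
  fun u => (1 / m0 u) * ((∑ v ∈ G.neighborFinset u, m1 s(u, v)) * f u
    - ∑ v ∈ G.neighborFinset u, m1 s(u, v) * f v)

/-- `lam` is an eigenvalue of the weighted Laplacian. -/
def IsEigenval {V : Type*} [Fintype V] (G : SimpleGraph V) [DecidableRel G.Adj]
    (m0 : V → ℝ) (m1 : Sym2 V → ℝ) (lam : ℝ) : Prop :=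
  ∃ f : V → ℝ, f ≠ 0 ∧ lapl G m0 m1 f = fun u => lam * f u

/-- `lam` is the smallest nonzero eigenvalue (the second smallest eigenvalue)
of the weighted Laplacian. -/
def IsLambdaOne {V : Type*} [Fintype V] (G : SimpleGraph V) [DecidableRel G.Adj]
    (m0 : V → ℝ) (m1 : Sym2 V → ℝ) (lam : ℝ) : Prop :=
  lam ≠ 0 ∧ IsEigenval G m0 m1 lam ∧
    ∀ mu : ℝ, mu ≠ 0 → IsEigenval G m0 m1 mu → lam ≤ mu

/-- The weighted barycenter `bar(φ) = (1/M) ∑_u m₀(u) φ(u)`. -/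
noncomputable def bar {V : Type*} {n : ℕ} [Fintype V] (m0 : V → ℝ)
    (φ : V → EuclideanSpace ℝ (Fin n)) : EuclideanSpace ℝ (Fin n) :=
  (1 / ∑ u, m0 u) • ∑ u, m0 u • φ u

/-- The weighted Dirichlet energy `∑_{uv∈E} m₁(uv) ‖φ(u) − φ(v)‖²`. -/
noncomputable def edgeNormSq {V : Type*} {n : ℕ} [Fintype V] (G : SimpleGraph V)
    [DecidableRel G.Adj] (m1 : Sym2 V → ℝ) (φ : V → EuclideanSpace ℝ (Fin n)) : ℝ :=
  ∑ e ∈ G.edgeFinset, m1 e *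
    Sym2.lift ⟨fun u v => ‖φ u - φ v‖ ^ 2, fun u v => by simp only [norm_sub_rev (φ u) (φ v)]⟩ e

/-- The weighted Dirichlet energy `∑_{uv∈E} m₁(uv) (φ(u) − φ(v))²` of a scalar function. -/
noncomputable def edgeSqS {V : Type*} [Fintype V] (G : SimpleGraph V)
    [DecidableRel G.Adj] (m1 : Sym2 V → ℝ) (φ : V → ℝ) : ℝ :=
  ∑ e ∈ G.edgeFinset, m1 e *
    Sym2.lift ⟨fun u v => (φ u - φ v) ^ 2, fun u v => by simp only []; ring⟩ e

/-- The subgraph of positively weighted edges. -/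
def posSub {V : Type*} (G : SimpleGraph V) (m1 : Sym2 V → ℝ) : SimpleGraph V :=
  SimpleGraph.fromRel (fun u v => G.Adj u v ∧ 0 < m1 s(u, v))

/-- Objective values of the barycenter-minimization problem:
`‖bar(φ)‖²` over `φ : V → ℝ^{|V|}` with `∑_u m₀(u)‖φ(u)‖² = M` and
`‖φ(u) − φ(v)‖ ≤ d(uv)` for all edges `uv`.  `δ(G,m₀,d)` is its infimum. -/
noncomputable def deltaSet {V : Type*} [Fintype V] (G : SimpleGraph V) [DecidableRel G.Adj]
    (m0 : V → ℝ) (d : Sym2 V → ℝ) : Set ℝ :=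
  {r | ∃ φ : V → EuclideanSpace ℝ (Fin (Fintype.card V)),
    (∑ u, m0 u * ‖φ u‖ ^ 2) = (∑ u, m0 u) ∧
    (∀ u v, G.Adj u v → ‖φ u - φ v‖ ≤ d s(u, v)) ∧
    r = ‖bar m0 φ‖ ^ 2}

/-- Objective values of the centered variance-maximization problem:
`(1/M) ∑_u m₀(u)‖φ(u)‖²` over `φ : V → ℝ^{|V|}` with `∑_u m₀(u)φ(u) = 0` and
`‖φ(u) − φ(v)‖ ≤ d(uv)` for all edges `uv`.  `ν(G,m₀,d)` is its supremum. -/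
noncomputable def nuSet {V : Type*} [Fintype V] (G : SimpleGraph V) [DecidableRel G.Adj]
    (m0 : V → ℝ) (d : Sym2 V → ℝ) : Set ℝ :=
  {r | ∃ φ : V → EuclideanSpace ℝ (Fin (Fintype.card V)),
    (∑ u, m0 u • φ u) = 0 ∧
    (∀ u v, G.Adj u v → ‖φ u - φ v‖ ≤ d s(u, v)) ∧
    r = (1 / ∑ u, m0 u) * ∑ u, m0 u * ‖φ u‖ ^ 2}

/-- Values `λ₁(G,(m₀,m₁))` over edge weights `m₁ ≥ 0` with
`∑_{uv∈E} m₁(uv) d(uv)² = D²`.  `σ(G,m₀,d)` is its supremum. -/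
noncomputable def sigmaSet {V : Type*} [Fintype V] (G : SimpleGraph V) [DecidableRel G.Adj]
    (m0 : V → ℝ) (d : Sym2 V → ℝ) : Set ℝ :=
  {lam | ∃ m1 : Sym2 V → ℝ, (∀ e, 0 ≤ m1 e) ∧
    (∑ e ∈ G.edgeFinset, m1 e * d e ^ 2) = (∑ e ∈ G.edgeFinset, d e ^ 2) ∧
    IsLambdaOne G m0 m1 lam}
section A
variable {V : Type*} [Fintype V] (G : SimpleGraph V) [DecidableRel G.Adj]

lemma aux_sum_nbr (F : Sym2 V → ℝ) :
    ∑ u, ∑ v ∈ G.neighborFinset u, F s(u, v) = 2 * ∑ e ∈ G.edgeFinset, F e := by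
  classical
  have h1 : ∑ d : G.Dart, F d.edge = ∑ u, ∑ v ∈ G.neighborFinset u, F s(u, v) := by
    rw [← Finset.sum_fiberwise_of_maps_to (fun (d : G.Dart) _ => Finset.mem_univ d.fst)
      (fun d => F d.edge)]
    refine Finset.sum_congr rfl fun u _ => ?_
    refine Finset.sum_bij' (fun d _ => d.snd)
      (fun v hv => ⟨(u, v), (SimpleGraph.mem_neighborFinset _ _ _).1 hv⟩) ?_ ?_ ?_ ?_ ?_
    · intro d hd
      simp only [Finset.mem_filter, Finset.mem_univ, true_and] at hd
      rw [SimpleGraph.mem_neighborFinset]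
      exact hd ▸ d.adj
    · intro v hv
      simp
    · intro d hd
      simp only [Finset.mem_filter, Finset.mem_univ, true_and] at hd
      subst hd; rfl
    · intro v hv; rfl
    · intro d hd
      simp only [Finset.mem_filter, Finset.mem_univ, true_and] at hd
      subst hd
      rfl
  have h2 : ∑ d : G.Dart, F d.edge = 2 * ∑ e ∈ G.edgeFinset, F e := by
    rw [← Finset.sum_fiberwise_of_maps_to (fun (d : G.Dart) _ =>
      (SimpleGraph.mem_edgeFinset).2 d.edge_mem) (fun d => F d.edge)]
    rw [Finset.mul_sum]
    refine Finset.sum_congr rfl fun e he => ?_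
    have hcard := G.dart_edge_fiber_card e ((SimpleGraph.mem_edgeFinset).1 he)
    have hc : ∀ d ∈ Finset.univ.filter (fun d : G.Dart => d.edge = e), F d.edge = F e := by
      intro d hd
      simp only [Finset.mem_filter] at hd
      rw [hd.2]
    rw [Finset.sum_congr rfl hc, Finset.sum_const, hcard]
    simp [mul_comm]
  rw [← h1, h2]

lemma aux_swap (h : V → V → ℝ) :
    ∑ u, ∑ v ∈ G.neighborFinset u, h u v = ∑ u, ∑ v ∈ G.neighborFinset u, h v u := by
  simp only [SimpleGraph.neighborFinset_eq_filter, Finset.sum_filter]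
  rw [Finset.sum_comm]
  refine Finset.sum_congr rfl fun u _ => Finset.sum_congr rfl fun v _ => ?_
  simp only [SimpleGraph.adj_comm]

lemma aux_green (m0 : V → ℝ) (m1 : Sym2 V → ℝ) (hm0 : ∀ u, 0 < m0 u) (f g : V → ℝ) :
    ∑ u, m0 u * lapl G m0 m1 f u * g u
      = ∑ u, ∑ v ∈ G.neighborFinset u, m1 s(u, v) * (f u - f v) * g u := by
  refine Finset.sum_congr rfl fun u _ => ?_
  have h0 : m0 u ≠ 0 := (hm0 u).ne'
  simp only [lapl]
  rw [show ∀ A : ℝ, m0 u * (1 / m0 u * A) * g u = A * g u by intro A; field_simp]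
  refine Eq.symm ?_
  calc ∑ v ∈ G.neighborFinset u, m1 s(u, v) * (f u - f v) * g u
      = (∑ v ∈ G.neighborFinset u, (m1 s(u, v) * f u - m1 s(u, v) * f v)) * g u := by
        rw [Finset.sum_mul]; exact Finset.sum_congr rfl fun v _ => by ring
    _ = _ := by rw [Finset.sum_sub_distrib, ← Finset.sum_mul]

lemma aux_sym (m1 : Sym2 V → ℝ) (f g : V → ℝ) :
    2 * ∑ u, ∑ v ∈ G.neighborFinset u, m1 s(u, v) * (f u - f v) * g u
      = ∑ u, ∑ v ∈ G.neighborFinset u, m1 s(u, v) * ((f u - f v) * (g u - g v)) := by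
  have hneg : ∑ u, ∑ v ∈ G.neighborFinset u, m1 s(u, v) * (f u - f v) * g v
      = - ∑ u, ∑ v ∈ G.neighborFinset u, m1 s(u, v) * (f u - f v) * g u := by
    rw [aux_swap G (fun u v => m1 s(u, v) * (f u - f v) * g v), ← Finset.sum_neg_distrib]
    refine Finset.sum_congr rfl fun u _ => ?_
    rw [← Finset.sum_neg_distrib]
    refine Finset.sum_congr rfl fun v _ => ?_
    rw [Sym2.eq_swap]; ring
  have expand : ∑ u, ∑ v ∈ G.neighborFinset u, m1 s(u, v) * ((f u - f v) * (g u - g v))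
      = (∑ u, ∑ v ∈ G.neighborFinset u, m1 s(u, v) * (f u - f v) * g u)
        - ∑ u, ∑ v ∈ G.neighborFinset u, m1 s(u, v) * (f u - f v) * g v := by
    rw [← Finset.sum_sub_distrib]
    refine Finset.sum_congr rfl fun u _ => ?_
    rw [← Finset.sum_sub_distrib]
    exact Finset.sum_congr rfl fun v _ => by ring
  rw [expand, hneg]
  ring
end A

section B
open scoped RealInnerProductSpace

variable {V : Type*} [Fintype V] [Nonempty V]

lemma aux_rayleigh (G : SimpleGraph V) [DecidableRel G.Adj]
    (m0 : V → ℝ) (hm0 : ∀ u, 0 < m0 u) (m1 : Sym2 V → ℝ) (hm1 : ∀ e, 0 ≤ m1 e)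
    (hconn : (posSub G m1).Connected) (lam : ℝ) (hlam : IsLambdaOne G m0 m1 lam)
    (g : V → ℝ) (hg : ∑ u, m0 u * g u = 0) :
    lam * ∑ u, m0 u * (g u * g u)
      ≤ (1/2) * ∑ u, ∑ v ∈ G.neighborFinset u, m1 s(u, v) * ((g u - g v) * (g u - g v)) := by
  classical
  set w : V → ℝ := fun u => Real.sqrt (m0 u) with hwdef
  have hwpos : ∀ u, 0 < w u := fun u => Real.sqrt_pos.2 (hm0 u)
  have hwne : ∀ u, w u ≠ 0 := fun u => (hwpos u).ne'
  have hww : ∀ u, w u * w u = m0 u := fun u => Real.mul_self_sqrt (hm0 u).le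
  set Tf : (EuclideanSpace ℝ V) → (EuclideanSpace ℝ V) :=
    fun x => WithLp.toLp 2 (fun u => w u * lapl G m0 m1 (fun v => x v / w v) u) with hTf
  have Tadd : ∀ x y, Tf (x + y) = Tf x + Tf y := by
    intro x y
    ext u
    simp only [hTf, lapl, PiLp.add_apply, PiLp.toLp_apply]
    rw [show ∑ v ∈ G.neighborFinset u, m1 s(u, v) * ((x v + y v) / w v)
        = (∑ v ∈ G.neighborFinset u, m1 s(u, v) * (x v / w v))
          + ∑ v ∈ G.neighborFinset u, m1 s(u, v) * (y v / w v) by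
      rw [← Finset.sum_add_distrib]
      refine Finset.sum_congr rfl fun v _ => ?_
      rw [add_div]; ring]
    rw [add_div]
    ring
  have Tsmul : ∀ (c : ℝ) (x : EuclideanSpace ℝ V), Tf (c • x) = c • Tf x := by
    intro c x
    ext u
    simp only [hTf, lapl, PiLp.smul_apply, smul_eq_mul, PiLp.toLp_apply]
    rw [show ∑ v ∈ G.neighborFinset u, m1 s(u, v) * (c * x v / w v)
        = c * ∑ v ∈ G.neighborFinset u, m1 s(u, v) * (x v / w v) by
      rw [Finset.mul_sum]
      refine Finset.sum_congr rfl fun v _ => ?_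
      rw [mul_div_assoc]; ring]
    rw [mul_div_assoc]
    ring
  set T : EuclideanSpace ℝ V →ₗ[ℝ] EuclideanSpace ℝ V :=
    { toFun := Tf, map_add' := Tadd, map_smul' := Tsmul } with hTdef
  have hinner : ∀ x y : EuclideanSpace ℝ V, ⟪x, y⟫ = ∑ u, x u * y u := by
    intro x y
    simp [PiLp.inner_apply, RCLike.inner_apply, conj_trivial]
    exact Finset.sum_congr rfl fun u _ => mul_comm _ _
  have innerT : ∀ x y : EuclideanSpace ℝ V, ⟪T x, y⟫
      = (1/2) * ∑ u, ∑ v ∈ G.neighborFinset u,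
          m1 s(u, v) * ((x u / w u - x v / w v) * (y u / w u - y v / w v)) := by
    intro x y
    rw [hinner]
    have step1 : ∀ u, (T x) u * y u
        = m0 u * lapl G m0 m1 (fun v => x v / w v) u * (y u / w u) := by
      intro u
      have e1 : (T x) u = w u * lapl G m0 m1 (fun v => x v / w v) u := rfl
      rw [e1, ← hww u]
      generalize lapl G m0 m1 (fun v => x v / w v) u = L
      rw [show w u * w u * L * (y u / w u) = (y u / w u * w u) * (w u * L) from by ring,
        div_mul_cancel₀ _ (hwne u)]
      ring
    rw [Finset.sum_congr rfl fun u _ => step1 u]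
    rw [aux_green G m0 m1 hm0 (fun v => x v / w v) (fun v => y v / w v)]
    rw [← aux_sym G m1 (fun v => x v / w v) (fun v => y v / w v)]
    ring
  have hTsym : T.IsSymmetric := by
    intro x y
    rw [innerT x y, real_inner_comm, innerT y x]
    congr 1
    refine Finset.sum_congr rfl fun u _ => Finset.sum_congr rfl fun v _ => ?_
    ring
  have heigen : ∀ (μ : ℝ) (x : EuclideanSpace ℝ V), x ≠ 0 → T x = μ • x →
      IsEigenval G m0 m1 μ := by
    intro μ x hx0 hTx
    refine ⟨fun v => x v / w v, ?_, ?_⟩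
    · intro hf
      apply hx0
      ext u
      have hxu : x u / w u = 0 := congrFun hf u
      have : x u = 0 := by
        rcases div_eq_zero_iff.1 hxu with h | h
        · exact h
        · exact absurd h (hwne u)
      exact this
    · funext u
      have h2 : w u * lapl G m0 m1 (fun v => x v / w v) u = μ * x u := by
        have : (T x) u = (μ • x) u := by rw [hTx]
        rw [PiLp.smul_apply, smul_eq_mul] at this
        exact this
      apply mul_left_cancel₀ (hwne u)
      rw [h2, show w u * (μ * (x u / w u)) = μ * (x u / w u * w u) from by ring,
        div_mul_cancel₀ _ (hwne u)]
  have hker : ∀ x : EuclideanSpace ℝ V, T x = 0 → ∃ k : ℝ, ∀ u, x u = k * w u := by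
    intro x hx
    have h0 : ⟪T x, x⟫ = (0:ℝ) := by rw [hx, inner_zero_left]
    rw [innerT] at h0
    have hQ : ∑ u, ∑ v ∈ G.neighborFinset u,
        m1 s(u, v) * ((x u / w u - x v / w v) * (x u / w u - x v / w v)) = 0 := by linarith
    have hnn : ∀ u ∈ (univ : Finset V), (0:ℝ) ≤ ∑ v ∈ G.neighborFinset u,
        m1 s(u, v) * ((x u / w u - x v / w v) * (x u / w u - x v / w v)) :=
      fun u _ => Finset.sum_nonneg fun v _ => mul_nonneg (hm1 _) (mul_self_nonneg _)
    have h1 := (Finset.sum_eq_zero_iff_of_nonneg hnn).1 hQ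
    have hterm : ∀ u v, v ∈ G.neighborFinset u →
        m1 s(u, v) * ((x u / w u - x v / w v) * (x u / w u - x v / w v)) = 0 := by
      intro u v hv
      exact (Finset.sum_eq_zero_iff_of_nonneg
        (fun v _ => mul_nonneg (hm1 _) (mul_self_nonneg _))).1 (h1 u (mem_univ u)) v hv
    have hedge : ∀ u v, (posSub G m1).Adj u v → x u / w u = x v / w v := by
      intro u v huv
      rw [posSub, SimpleGraph.fromRel_adj] at huv
      obtain ⟨hne, h | h⟩ := huv
      · have hv : v ∈ G.neighborFinset u := (SimpleGraph.mem_neighborFinset _ _ _).2 h.1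
        have ht := hterm u v hv
        rcases mul_eq_zero.1 ht with h' | h'
        · exact absurd h' h.2.ne'
        · exact sub_eq_zero.1 (mul_self_eq_zero.1 h')
      · have hv : u ∈ G.neighborFinset v := (SimpleGraph.mem_neighborFinset _ _ _).2 h.1
        have ht := hterm v u hv
        rcases mul_eq_zero.1 ht with h' | h'
        · exact absurd h' h.2.ne'
        · exact (sub_eq_zero.1 (mul_self_eq_zero.1 h')).symm
    obtain ⟨u0⟩ := ‹Nonempty V›
    have hconst : ∀ u, x u / w u = x u0 / w u0 := by
      intro u
      obtain ⟨p⟩ := hconn.preconnected u u0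
      induction p with
      | nil => rfl
      | cons h q ih => rw [hedge _ _ h]; exact ih
    refine ⟨x u0 / w u0, fun u => ?_⟩
    rw [← hconst u, div_mul_cancel₀ _ (hwne u)]
  have hrank : Module.finrank ℝ (EuclideanSpace ℝ V) = Fintype.card V :=
    finrank_euclideanSpace
  set b := hTsym.eigenvectorBasis hrank with hbdef
  set μ := hTsym.eigenvalues hrank with hmudef
  have hb : ∀ i, T (b i) = μ i • b i := fun i => hTsym.apply_eigenvectorBasis hrank i
  set x : EuclideanSpace ℝ V := WithLp.toLp 2 (fun u => w u * g u) with hxdef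
  have hq : ∀ u, x u / w u = g u := fun u => mul_div_cancel_left₀ _ (hwne u)
  set c : Fin (Fintype.card V) → ℝ := fun i => ⟪x, b i⟫ with hcdef
  have hc : ∀ i, c i = ⟪x, b i⟫ := fun i => rfl
  have hzero : ∀ i, μ i = 0 → c i = 0 := by
    intro i h0
    obtain ⟨k, hk⟩ := hker (b i) (by rw [hb i, h0, zero_smul])
    have e : c i = ∑ u, x u * (k * w u) := by
      rw [hc i, hinner]
      exact Finset.sum_congr rfl fun u _ => by rw [hk u]
    rw [e]
    calc ∑ u, x u * (k * w u) = k * ∑ u, m0 u * g u := by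
          rw [Finset.mul_sum]
          refine Finset.sum_congr rfl fun u _ => ?_
          rw [hxdef, ← hww u, PiLp.toLp_apply]; ring
      _ = 0 := by rw [hg, mul_zero]
  have hsum1 : ⟪x, x⟫ = ∑ i, c i * c i := by
    rw [← b.sum_inner_mul_inner x x]
    refine Finset.sum_congr rfl fun i _ => ?_
    rw [hc i]
    congr 1
    exact real_inner_comm _ _
  have hsum2 : ⟪T x, x⟫ = ∑ i, μ i * (c i * c i) := by
    rw [← b.sum_inner_mul_inner (T x) x]
    refine Finset.sum_congr rfl fun i _ => ?_
    rw [hTsym x (b i), hb i, real_inner_smul_right, hc i,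
      show ⟪b i, x⟫ = ⟪x, b i⟫ from real_inner_comm _ _]
    ring
  have hle : ∑ i, lam * (c i * c i) ≤ ∑ i, μ i * (c i * c i) := by
    refine Finset.sum_le_sum fun i _ => ?_
    by_cases h0 : μ i = 0
    · rw [hzero i h0, h0]; simp
    · have hev : IsEigenval G m0 m1 (μ i) :=
        heigen (μ i) (b i) (by simpa using b.toBasis.ne_zero i) (hb i)
      exact mul_le_mul_of_nonneg_right (hlam.2.2 (μ i) h0 hev) (mul_self_nonneg _)
  have e1 : ⟪x, x⟫ = ∑ u, m0 u * (g u * g u) := by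
    rw [hinner]
    refine Finset.sum_congr rfl fun u _ => ?_
    rw [hxdef, ← hww u, PiLp.toLp_apply]; ring
  have e2 : ⟪T x, x⟫ = (1/2) * ∑ u, ∑ v ∈ G.neighborFinset u,
      m1 s(u, v) * ((g u - g v) * (g u - g v)) := by
    rw [innerT]
    congr 1
    exact Finset.sum_congr rfl fun u _ => Finset.sum_congr rfl fun v _ => by
      rw [hq u, hq v]
  calc lam * ∑ u, m0 u * (g u * g u) = ∑ i, lam * (c i * c i) := by
        rw [← e1, hsum1, Finset.mul_sum]
    _ ≤ ∑ i, μ i * (c i * c i) := hle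
    _ = (1/2) * ∑ u, ∑ v ∈ G.neighborFinset u,
          m1 s(u, v) * ((g u - g v) * (g u - g v)) := by rw [← hsum2, e2]
end B

section C
open scoped RealInnerProductSpace
variable {V : Type*} [Fintype V] [Nonempty V]

lemma aux_lampos (G : SimpleGraph V) [DecidableRel G.Adj]
    (m0 : V → ℝ) (hm0 : ∀ u, 0 < m0 u) (m1 : Sym2 V → ℝ) (hm1 : ∀ e, 0 ≤ m1 e)
    (lam : ℝ) (hlam : IsLambdaOne G m0 m1 lam) : 0 < lam := by
  obtain ⟨f, hf0, hfe⟩ := hlam.2.1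
  have hE : lam * ∑ u, m0 u * (f u * f u) = ∑ u, m0 u * lapl G m0 m1 f u * f u := by
    rw [Finset.mul_sum]
    refine Finset.sum_congr rfl fun u _ => ?_
    rw [show lapl G m0 m1 f u = lam * f u from congrFun hfe u]
    ring
  have hQnn : (0:ℝ) ≤ ∑ u, ∑ v ∈ G.neighborFinset u,
      m1 s(u, v) * ((f u - f v) * (f u - f v)) :=
    Finset.sum_nonneg fun u _ => Finset.sum_nonneg fun v _ =>
      mul_nonneg (hm1 _) (mul_self_nonneg _)
  have hS : (0:ℝ) ≤ ∑ u, m0 u * lapl G m0 m1 f u * f u := by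
    rw [aux_green G m0 m1 hm0 f f]
    have := aux_sym G m1 f f
    linarith
  have hpos : 0 < ∑ u, m0 u * (f u * f u) := by
    obtain ⟨u, hu⟩ := Function.ne_iff.1 hf0
    refine Finset.sum_pos' (fun u _ => mul_nonneg (hm0 u).le (mul_self_nonneg _))
      ⟨u, mem_univ u, mul_pos (hm0 u) (mul_self_pos.2 hu)⟩
  have hge : 0 ≤ lam := by nlinarith
  exact lt_of_le_of_ne hge (Ne.symm hlam.1)

lemma aux_rayleigh_vec {n : ℕ} (G : SimpleGraph V) [DecidableRel G.Adj]
    (m0 : V → ℝ) (hm0 : ∀ u, 0 < m0 u) (m1 : Sym2 V → ℝ) (hm1 : ∀ e, 0 ≤ m1 e)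
    (hconn : (posSub G m1).Connected) (lam : ℝ) (hlam : IsLambdaOne G m0 m1 lam)
    (ψ : V → EuclideanSpace ℝ (Fin n)) (hz : ∑ u, m0 u • ψ u = 0) :
    lam * ∑ u, m0 u * ‖ψ u‖ ^ 2 ≤ edgeNormSq G m1 ψ := by
  classical
  have hnormsq : ∀ z : EuclideanSpace ℝ (Fin n), ‖z‖ ^ 2 = ∑ k, z k * z k := by
    intro z
    rw [EuclideanSpace.norm_eq, Real.sq_sqrt (Finset.sum_nonneg fun k _ => by positivity)]
    refine Finset.sum_congr rfl fun k _ => ?_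
    rw [Real.norm_eq_abs, sq_abs, sq]
  have hcoord : ∀ k, ∑ u, m0 u * ψ u k = 0 := by
    intro k
    have h1 := congrArg (fun z : EuclideanSpace ℝ (Fin n) => z k) hz
    simp only at h1
    rw [WithLp.ofLp_sum, Finset.sum_apply] at h1
    simpa [PiLp.smul_apply, smul_eq_mul] using h1
  have hk : ∀ k, lam * ∑ u, m0 u * (ψ u k * ψ u k)
      ≤ (1/2) * ∑ u, ∑ v ∈ G.neighborFinset u,
          m1 s(u, v) * ((ψ u k - ψ v k) * (ψ u k - ψ v k)) :=
    fun k => aux_rayleigh G m0 hm0 m1 hm1 hconn lam hlam (fun u => ψ u k) (hcoord k)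
  have hLHS : lam * ∑ u, m0 u * ‖ψ u‖ ^ 2
      = ∑ k, lam * ∑ u, m0 u * (ψ u k * ψ u k) := by
    rw [← Finset.mul_sum]
    congr 1
    rw [Finset.sum_comm]
    refine Finset.sum_congr rfl fun u _ => ?_
    rw [hnormsq, Finset.mul_sum]
  have hRHS : ∑ k, (1/2) * ∑ u, ∑ v ∈ G.neighborFinset u,
      m1 s(u, v) * ((ψ u k - ψ v k) * (ψ u k - ψ v k)) = edgeNormSq G m1 ψ := by
    rw [← Finset.mul_sum, Finset.sum_comm]
    have h2 : ∀ u, ∑ k, ∑ v ∈ G.neighborFinset u,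
        m1 s(u, v) * ((ψ u k - ψ v k) * (ψ u k - ψ v k))
        = ∑ v ∈ G.neighborFinset u, m1 s(u, v) * ‖ψ u - ψ v‖ ^ 2 := by
      intro u
      rw [Finset.sum_comm]
      refine Finset.sum_congr rfl fun v _ => ?_
      rw [hnormsq (ψ u - ψ v), Finset.mul_sum]
      exact Finset.sum_congr rfl fun k _ => by rw [PiLp.sub_apply]
    rw [Finset.sum_congr rfl fun u _ => h2 u]
    have ha := aux_sum_nbr G (fun e => m1 e * Sym2.lift
      ⟨fun u v => ‖ψ u - ψ v‖ ^ 2, fun u v => by simp only [norm_sub_rev (ψ u) (ψ v)]⟩ e)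
    have hb2 : ∑ u, ∑ v ∈ G.neighborFinset u, m1 s(u, v) * ‖ψ u - ψ v‖ ^ 2
        = 2 * edgeNormSq G m1 ψ := by
      rw [edgeNormSq, ← ha]
      exact Finset.sum_congr rfl fun u _ => Finset.sum_congr rfl fun v _ => by
        rw [Sym2.lift_mk]
    rw [hb2]
    ring
  rw [hLHS, ← hRHS]
  exact Finset.sum_le_sum fun k _ => hk k
end C

section Final
open scoped RealInnerProductSpace
/-- `δ(G,m₀,d) ≥ 1 − (D²/M)/λ₁(G,(m₀,m₁))` for any normalized edge weight. -/
theorem delta_ge_one_sub_lambdaOne {V : Type*} [Fintype V] [Nonempty V]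
    (G : SimpleGraph V) [DecidableRel G.Adj] (hG : G.Connected)
    (m0 : V → ℝ) (hm0 : ∀ u, 0 < m0 u)
    (d : Sym2 V → ℝ) (hd : ∀ e ∈ G.edgeSet, 0 < d e)
    (m1 : Sym2 V → ℝ) (hm1 : ∀ e, 0 ≤ m1 e) (hconn : (posSub G m1).Connected)
    (hnorm : ∑ e ∈ G.edgeFinset, m1 e * d e ^ 2 = ∑ e ∈ G.edgeFinset, d e ^ 2)
    (lam : ℝ) (hlam : IsLambdaOne G m0 m1 lam) :
    sInf (deltaSet G m0 d) ≥
      1 - ((∑ e ∈ G.edgeFinset, d e ^ 2) / (∑ u, m0 u)) / lam := by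
  classical
  have hM : 0 < ∑ u, m0 u := Finset.sum_pos (fun u _ => hm0 u) univ_nonempty
  set M := ∑ u, m0 u with hMdef
  set D2 := ∑ e ∈ G.edgeFinset, d e ^ 2 with hD2def
  have hlampos : 0 < lam := aux_lampos G m0 hm0 m1 hm1 lam hlam
  have hne : (deltaSet G m0 d).Nonempty := by
    have hc : 0 < Fintype.card V := Fintype.card_pos
    refine ⟨‖bar m0 (fun _ : V =>
        EuclideanSpace.single (⟨0, hc⟩ : Fin (Fintype.card V)) (1:ℝ))‖ ^ 2,
      fun _ => EuclideanSpace.single ⟨0, hc⟩ 1, ?_, ?_, rfl⟩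
    · simp [EuclideanSpace.norm_single]
    · intro u v huv
      simp only [sub_self, norm_zero]
      exact (hd _ (G.mem_edgeSet.mpr huv)).le
  refine le_csInf hne ?_
  rintro b ⟨φ, hsum, hlip, rfl⟩
  set β := bar m0 φ with hbeta
  set ψ : V → EuclideanSpace ℝ (Fin (Fintype.card V)) := fun u => φ u - β with hpsi
  have hSdef : (∑ u, m0 u • φ u) = M • β := by
    rw [hbeta, bar, smul_smul, ← hMdef, mul_one_div, div_self hM.ne', one_smul]
  have hz : ∑ u, m0 u • ψ u = 0 := by
    have h1 : ∀ u, m0 u • ψ u = m0 u • φ u - m0 u • β := fun u => smul_sub _ _ _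
    rw [Finset.sum_congr rfl fun u _ => h1 u, Finset.sum_sub_distrib, hSdef,
      ← Finset.sum_smul, ← hMdef, sub_self]
  have hinnsum : ∑ u, m0 u * ⟪φ u, β⟫ = M * ‖β‖ ^ 2 := by
    have h1 : ⟪∑ u, m0 u • φ u, β⟫ = ∑ u, m0 u * ⟪φ u, β⟫ := by
      rw [sum_inner]
      exact Finset.sum_congr rfl fun u _ => real_inner_smul_left _ _ _
    rw [← h1, hSdef, real_inner_smul_left, real_inner_self_eq_norm_sq]
  have hvar : ∑ u, m0 u * ‖ψ u‖ ^ 2 = M - M * ‖β‖ ^ 2 := by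
    have h2 : ∀ u, m0 u * ‖ψ u‖ ^ 2
        = m0 u * ‖φ u‖ ^ 2 - 2 * (m0 u * ⟪φ u, β⟫) + m0 u * ‖β‖ ^ 2 := by
      intro u
      show m0 u * ‖φ u - β‖ ^ 2 = _
      rw [norm_sub_sq_real]
      ring
    rw [Finset.sum_congr rfl fun u _ => h2 u, Finset.sum_add_distrib,
      Finset.sum_sub_distrib, ← Finset.mul_sum, hinnsum, hsum, ← Finset.sum_mul, ← hMdef]
    ring
  have hray := aux_rayleigh_vec G m0 hm0 m1 hm1 hconn lam hlam ψ hz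
  have hdir : edgeNormSq G m1 ψ = edgeNormSq G m1 φ := by
    refine Finset.sum_congr rfl fun e he => ?_
    induction e using Sym2.ind with
    | _ u v =>
      rw [Sym2.lift_mk, Sym2.lift_mk]
      show m1 s(u, v) * ‖ψ u - ψ v‖ ^ 2 = m1 s(u, v) * ‖φ u - φ v‖ ^ 2
      rw [show ψ u - ψ v = φ u - φ v from sub_sub_sub_cancel_right _ _ _]
  have hbound : edgeNormSq G m1 φ ≤ ∑ e ∈ G.edgeFinset, m1 e * d e ^ 2 := by
    refine Finset.sum_le_sum fun e he => ?_
    induction e using Sym2.ind with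
    | _ u v =>
      rw [Sym2.lift_mk]
      show m1 s(u, v) * ‖φ u - φ v‖ ^ 2 ≤ m1 s(u, v) * d s(u, v) ^ 2
      have hadj : G.Adj u v := G.mem_edgeSet.1 (SimpleGraph.mem_edgeFinset.1 he)
      exact mul_le_mul_of_nonneg_left
        (pow_le_pow_left₀ (norm_nonneg _) (hlip u v hadj) 2) (hm1 _)
  have key : lam * (M - M * ‖β‖ ^ 2) ≤ D2 := by
    rw [← hvar]
    calc lam * ∑ u, m0 u * ‖ψ u‖ ^ 2 ≤ edgeNormSq G m1 ψ := hray
      _ = edgeNormSq G m1 φ := hdir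
      _ ≤ ∑ e ∈ G.edgeFinset, m1 e * d e ^ 2 := hbound
      _ = D2 := hnorm
  have h4 : 1 - ‖β‖ ^ 2 ≤ D2 / (M * lam) := by
    rw [le_div_iff₀ (mul_pos hM hlampos)]
    nlinarith [key]
  rw [div_div]
  linarith [h4]

end Final
end

section
/- Equality δ(G,m₀,d) = 1 − (D²/M)/λ₁(G,(m₀,m₁)) holds if and only if there exists φ: V → ℝ^{|V|} satisfying the feasibility constraints ∑_u m₀(u)‖φ(u)‖² = M and ‖φ(u)−φ(v)‖ ≤ d(uv) for all uv ∈ E, together with (i) m₁(uv)(d(uv)² − ‖φ(u)−φ(v)‖²) = 0 for all uv ∈ E and (ii) Δ_{(m₀,m₁)}φ = λ₁(G,(m₀,m₁))(φ − bar(φ)). -/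
open Finset
open scoped Classical

namespace DeltaProof
variable {V : Type*} [Fintype V] (G : SimpleGraph V) [DecidableRel G.Adj]

/-- equiv between sigma of neighbor finsets and darts -/
def dartEquiv : (Σ u : V, (G.neighborFinset u : Finset V)) ≃ G.Dart where
  toFun := fun s => ⟨(s.1, s.2), (SimpleGraph.mem_neighborFinset _ _ _).1 s.2.2⟩
  invFun := fun d => ⟨d.fst, ⟨d.snd, (SimpleGraph.mem_neighborFinset _ _ _).2 d.adj⟩⟩
  left_inv := fun s => rfl
  right_inv := fun d => rfl

lemma sum_darts (f : V → V → ℝ) :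
    ∑ d : G.Dart, f d.fst d.snd = ∑ u, ∑ v ∈ G.neighborFinset u, f u v := by
  rw [← Fintype.sum_equiv (dartEquiv G) (fun s => f s.1 s.2) (fun d => f d.fst d.snd)
    (fun s => rfl)]
  rw [← Finset.univ_sigma_univ, Finset.sum_sigma]
  exact Finset.sum_congr rfl fun u _ => Finset.sum_coe_sort (G.neighborFinset u) (fun v => f u v)

lemma sum_darts_edges (f : V → V → ℝ) :
    ∑ d : G.Dart, f d.fst d.snd = ∑ e ∈ G.edgeFinset,
      Sym2.lift ⟨fun u v => f u v + f v u, fun u v => add_comm _ _⟩ e := by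
  have hmap : ∀ d : G.Dart, d ∈ (univ : Finset G.Dart) →
      d.edge ∈ G.edgeFinset := fun d _ => by
    rw [SimpleGraph.mem_edgeFinset]; exact d.edge_mem
  rw [← Finset.sum_fiberwise_of_maps_to hmap (fun d : G.Dart => f d.fst d.snd)]
  refine Finset.sum_congr rfl fun e he => ?_
  rw [SimpleGraph.mem_edgeFinset] at he
  induction e with
  | _ u v =>
    have hfib : (univ.filter fun d : G.Dart => d.edge = s(u, v)) =
        {(⟨(u,v), he⟩ : G.Dart), (⟨(u,v), he⟩ : G.Dart).symm} := by
      have := SimpleGraph.Dart.edge_fiber (⟨(u,v), he⟩ : G.Dart)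
      convert this
      rfl
    rw [hfib, Finset.sum_insert (by rw [Finset.mem_singleton]; exact (SimpleGraph.Dart.symm_ne _).symm),
      Finset.sum_singleton]
    simp only [Sym2.lift_mk]
    rfl

variable (m0 : V → ℝ) (m1 : Sym2 V → ℝ)

/-- the bilinear edge form -/
noncomputable def bform (g h : V → ℝ) : ℝ :=
  ∑ e ∈ G.edgeFinset, m1 e *
    Sym2.lift ⟨fun u v => (g u - g v) * (h u - h v), fun u v => by ring⟩ e

lemma lapl_mul (hm0 : ∀ u, 0 < m0 u) (g h : V → ℝ) :
    ∑ u, m0 u * (lapl G m0 m1 g u * h u) = bform G m1 g h := by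
  have step1 : ∀ u, m0 u * (lapl G m0 m1 g u * h u)
      = ∑ v ∈ G.neighborFinset u, m1 s(u, v) * ((g u - g v) * h u) := by
    intro u
    have h0 : m0 u ≠ 0 := (hm0 u).ne'
    rw [lapl]
    rw [show ∀ A : ℝ, m0 u * (1 / m0 u * A * h u) = A * h u from
      fun A => by field_simp]
    rw [Finset.sum_mul, ← Finset.sum_sub_distrib, Finset.sum_mul]
    exact Finset.sum_congr rfl fun v _ => by ring
  rw [Finset.sum_congr rfl fun u _ => step1 u, ← sum_darts,
    sum_darts_edges G (fun u v => m1 s(u, v) * ((g u - g v) * h u))]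
  refine Finset.sum_congr rfl fun e he => ?_
  induction e with
  | _ u v =>
    simp only [Sym2.lift_mk]
    rw [show s(v, u) = s(u, v) from Sym2.eq_swap]
    ring

lemma lapl_self (hm0 : ∀ u, 0 < m0 u) (g : V → ℝ) :
    ∑ u, m0 u * (lapl G m0 m1 g u * g u) = edgeSqS G m1 g := by
  rw [lapl_mul G m0 m1 hm0 g g, bform, edgeSqS]
  refine Finset.sum_congr rfl fun e he => ?_
  induction e with
  | _ u v => simp only [Sym2.lift_mk]; ring

lemma sum_lapl (hm0 : ∀ u, 0 < m0 u) (g : V → ℝ) :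
    ∑ u, m0 u * lapl G m0 m1 g u = 0 := by
  have := lapl_mul G m0 m1 hm0 g (fun _ => 1)
  simp only [mul_one] at this
  rw [this, bform]
  refine Finset.sum_eq_zero fun e he => ?_
  induction e with
  | _ u v => simp only [Sym2.lift_mk]; ring

lemma edgeSq_nonneg (hm1 : ∀ e, 0 ≤ m1 e) (g : V → ℝ) : 0 ≤ edgeSqS G m1 g := by
  refine Finset.sum_nonneg fun e he => ?_
  induction e with
  | _ u v =>
    simp only [Sym2.lift_mk]
    exact mul_nonneg (hm1 _) (sq_nonneg _)

lemma edgeSq_expand (g h : V → ℝ) (t : ℝ) :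
    edgeSqS G m1 (fun u => g u + t * h u)
      = edgeSqS G m1 g + 2 * t * bform G m1 g h + t ^ 2 * edgeSqS G m1 h := by
  simp only [edgeSqS, bform, Finset.mul_sum, ← Finset.sum_add_distrib]
  refine Finset.sum_congr rfl fun e he => ?_
  induction e with
  | _ u v => simp only [Sym2.lift_mk]; ring

lemma edgeSq_shift (g : V → ℝ) (c : ℝ) :
    edgeSqS G m1 (fun u => g u - c) = edgeSqS G m1 g := by
  simp only [edgeSqS]
  refine Finset.sum_congr rfl fun e he => ?_
  induction e with
  | _ u v => simp only [Sym2.lift_mk]; ring_nf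

lemma lapl_shift (g : V → ℝ) (c : ℝ) :
    lapl G m0 m1 (fun u => g u - c) = fun u => lapl G m0 m1 g u := by
  funext u
  simp only [lapl]
  congr 1
  have : ∑ v ∈ G.neighborFinset u, m1 s(u, v) * (g v - c)
      = (∑ v ∈ G.neighborFinset u, m1 s(u, v) * g v)
        - (∑ v ∈ G.neighborFinset u, m1 s(u, v)) * c := by
    rw [Finset.sum_mul, ← Finset.sum_sub_distrib]
    exact Finset.sum_congr rfl fun v _ => by ring
  rw [this]
  ring

lemma ip_pos_of_ne (hm0 : ∀ u, 0 < m0 u) {f : V → ℝ} (hf : f ≠ 0) :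
    0 < ∑ u, m0 u * f u ^ 2 := by
  obtain ⟨u, hu⟩ := Function.ne_iff.1 hf
  refine Finset.sum_pos' (fun v _ => mul_nonneg (hm0 v).le (sq_nonneg _)) ⟨u, Finset.mem_univ u, ?_⟩
  have hu' : f u ≠ 0 := by simpa using hu
  exact mul_pos (hm0 u) (by positivity)

lemma eigen_centered (hm0 : ∀ u, 0 < m0 u) {mu : ℝ} (hmu : mu ≠ 0) {f : V → ℝ}
    (hf : lapl G m0 m1 f = fun u => mu * f u) : ∑ u, m0 u * f u = 0 := by
  have h0 := sum_lapl G m0 m1 hm0 f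
  rw [hf] at h0
  have : mu * ∑ u, m0 u * f u = 0 := by
    rw [Finset.mul_sum]; rw [← h0]; exact Finset.sum_congr rfl fun u _ => by ring
  exact (mul_eq_zero.1 this).resolve_left hmu

lemma eigen_energy (hm0 : ∀ u, 0 < m0 u) {mu : ℝ} {f : V → ℝ}
    (hf : lapl G m0 m1 f = fun u => mu * f u) :
    edgeSqS G m1 f = mu * ∑ u, m0 u * f u ^ 2 := by
  have h := lapl_self G m0 m1 hm0 f
  rw [hf] at h
  rw [← h, Finset.mul_sum]
  exact Finset.sum_congr rfl fun u _ => by ring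

lemma lam_pos (hm0 : ∀ u, 0 < m0 u) (hm1 : ∀ e, 0 ≤ m1 e) {lam : ℝ}
    (hlam : IsLambdaOne G m0 m1 lam) : 0 < lam := by
  obtain ⟨hne, ⟨f, hf0, hf⟩, _⟩ := hlam
  have h1 := eigen_energy G m0 m1 hm0 hf
  have h2 := edgeSq_nonneg G m1 hm1 f
  have h3 := ip_pos_of_ne m0 hm0 hf0
  rcases hne.lt_or_gt with h | h
  · nlinarith
  · exact h

lemma psd_eigen (hm0 : ∀ u, 0 < m0 u) (lam' : ℝ)
    (hbound : ∀ w : V → ℝ, (∑ u, m0 u * w u = 0) →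
      lam' * ∑ u, m0 u * w u ^ 2 ≤ edgeSqS G m1 w)
    (g : V → ℝ) (hg : ∑ u, m0 u * g u = 0)
    (heq : edgeSqS G m1 g = lam' * ∑ u, m0 u * g u ^ 2) :
    lapl G m0 m1 g = fun u => lam' * g u := by
  have key : ∀ h : V → ℝ, (∑ u, m0 u * h u = 0) →
      bform G m1 g h = lam' * ∑ u, m0 u * (g u * h u) := by
    intro h hh
    set a := edgeSqS G m1 h - lam' * ∑ u, m0 u * h u ^ 2 with ha
    set b := 2 * (bform G m1 g h - lam' * ∑ u, m0 u * (g u * h u)) with hb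
    have hq : ∀ t : ℝ, 0 ≤ a * (t * t) + b * t + 0 := by
      intro t
      have hcent : ∑ u, m0 u * (g u + t * h u) = 0 := by
        have : ∀ u, m0 u * (g u + t * h u) = m0 u * g u + t * (m0 u * h u) :=
          fun u => by ring
        rw [Finset.sum_congr rfl fun u _ => this u, Finset.sum_add_distrib,
          ← Finset.mul_sum, hg, hh]
        ring
      have hB := hbound (fun u => g u + t * h u) hcent
      rw [edgeSq_expand] at hB
      have hexp : ∑ u, m0 u * (g u + t * h u) ^ 2
          = ∑ u, m0 u * g u ^ 2 + 2 * t * ∑ u, m0 u * (g u * h u)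
            + t ^ 2 * ∑ u, m0 u * h u ^ 2 := by
        simp only [Finset.mul_sum, ← Finset.sum_add_distrib]
        exact Finset.sum_congr rfl fun u _ => by ring
      rw [hexp] at hB
      have hid : a * (t * t) + b * t + 0
          = (edgeSqS G m1 g + 2 * t * bform G m1 g h + t ^ 2 * edgeSqS G m1 h)
            - lam' * (∑ u, m0 u * g u ^ 2 + 2 * t * ∑ u, m0 u * (g u * h u)
              + t ^ 2 * ∑ u, m0 u * h u ^ 2)
            + (lam' * ∑ u, m0 u * g u ^ 2 - edgeSqS G m1 g) := by
        simp only [ha, hb]; ring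
      rw [hid]
      rw [heq] at hB ⊢
      linarith
    have hd := discrim_le_zero hq
    rw [discrim] at hd
    have hb0 : b = 0 := by nlinarith [sq_nonneg b]
    rw [hb] at hb0
    linarith
  set r : V → ℝ := fun u => lapl G m0 m1 g u - lam' * g u with hr
  have hrc : ∑ u, m0 u * r u = 0 := by
    have : ∀ u, m0 u * r u = m0 u * lapl G m0 m1 g u - lam' * (m0 u * g u) :=
      fun u => by simp only [hr]; ring
    rw [Finset.sum_congr rfl fun u _ => this u, Finset.sum_sub_distrib,
      sum_lapl G m0 m1 hm0 g, ← Finset.mul_sum, hg]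
    ring
  have horth : ∑ u, m0 u * r u ^ 2 = 0 := by
    have h1 := key r hrc
    have h2 := lapl_mul G m0 m1 hm0 g r
    have : ∀ u, m0 u * r u ^ 2
        = m0 u * (lapl G m0 m1 g u * r u) - lam' * (m0 u * (g u * r u)) :=
      fun u => by simp only [hr]; ring
    rw [Finset.sum_congr rfl fun u _ => this u, Finset.sum_sub_distrib, h2,
      ← Finset.mul_sum, h1]
    ring
  have hz : ∀ u, r u = 0 := by
    intro u
    have := (Finset.sum_eq_zero_iff_of_nonneg
      (fun v _ => mul_nonneg (hm0 v).le (sq_nonneg (r v)))).1 horth u (Finset.mem_univ u)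
    have hm := (hm0 u).ne'
    have : r u ^ 2 = 0 := by
      rcases mul_eq_zero.1 this with h | h
      · exact absurd h hm
      · exact h
    exact pow_eq_zero_iff (by norm_num) |>.1 this
  funext u
  have := hz u
  simp only [hr] at this
  linarith

lemma edgeSq_continuous : Continuous fun g : V → ℝ => edgeSqS G m1 g := by
  refine continuous_finset_sum _ fun e he => ?_
  induction e with
  | _ u v =>
    simp only [Sym2.lift_mk]
    exact continuous_const.mul (((continuous_apply u).sub (continuous_apply v)).pow 2)

lemma sum_m0_continuous (p : ℕ) : Continuous fun g : V → ℝ => ∑ u, m0 u * g u ^ p :=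
  continuous_finset_sum _ fun u _ => continuous_const.mul ((continuous_apply u).pow p)

lemma const_of_energy_zero (hm1 : ∀ e, 0 ≤ m1 e) (hconn : (posSub G m1).Connected)
    (g : V → ℝ) (hQ : edgeSqS G m1 g = 0) : ∀ u v, g u = g v := by
  have hterm := (Finset.sum_eq_zero_iff_of_nonneg (fun e (he : e ∈ G.edgeFinset) => by
    induction e with
    | _ u v =>
      simp only [Sym2.lift_mk]
      exact mul_nonneg (hm1 _) (sq_nonneg _))).1 hQ
  have hadj : ∀ u v, (posSub G m1).Adj u v → g u = g v := by
    intro u v huv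
    rw [posSub, SimpleGraph.fromRel_adj] at huv
    obtain ⟨hne, h | h⟩ := huv
    case inl =>
      have hA : G.Adj u v := h.1
      have hpos : 0 < m1 s(u, v) := h.2
      have hmem : s(u, v) ∈ G.edgeFinset := by
        rw [SimpleGraph.mem_edgeFinset]; exact hA
      have := hterm _ hmem
      simp only [Sym2.lift_mk] at this
      rcases mul_eq_zero.1 this with h' | h'
      · exact absurd h' hpos.ne'
      · nlinarith [h']
    case inr =>
      have hA : G.Adj u v := h.1.symm
      have hpos : 0 < m1 s(u, v) := by
        rw [show s(u,v) = s(v,u) from Sym2.eq_swap]; exact h.2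
      have hmem : s(u, v) ∈ G.edgeFinset := by
        rw [SimpleGraph.mem_edgeFinset]; exact hA
      have := hterm _ hmem
      simp only [Sym2.lift_mk] at this
      rcases mul_eq_zero.1 this with h' | h'
      · exact absurd h' hpos.ne'
      · nlinarith [h']
  intro u v
  obtain ⟨w⟩ := hconn u v
  induction w with
  | nil => rfl
  | cons hadj' p ih => exact (hadj _ _ hadj').trans ih

/-- Rayleigh: for centered g, `lam * ∑ m0 g² ≤ edge energy`. -/
lemma rayleigh (hm0 : ∀ u, 0 < m0 u) (hm1 : ∀ e, 0 ≤ m1 e)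
    (hconn : (posSub G m1).Connected) {lam : ℝ} (hlam : IsLambdaOne G m0 m1 lam) :
    ∀ g : V → ℝ, (∑ u, m0 u * g u = 0) →
      lam * ∑ u, m0 u * g u ^ 2 ≤ edgeSqS G m1 g := by
  classical
  set S : Set (V → ℝ) := {g | (∑ u, m0 u * g u ^ 2) = 1 ∧ (∑ u, m0 u * g u = 0)} with hS
  -- compactness
  have hclosed : IsClosed S := by
    refine IsClosed.inter ?_ ?_
    · exact isClosed_eq (sum_m0_continuous m0 2) continuous_const
    · exact isClosed_eq (by simpa using sum_m0_continuous m0 1) continuous_const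
  have hbdd : Bornology.IsBounded S := by
    refine (Metric.isBounded_closedBall
      (x := (0 : V → ℝ)) (r := Real.sqrt (∑ u, (m0 u)⁻¹))).subset ?_
    intro g hg
    rw [Metric.mem_closedBall, dist_zero_right]
    refine (pi_norm_le_iff_of_nonneg (Real.sqrt_nonneg _)).2 fun u => ?_
    rw [Real.norm_eq_abs, ← Real.sqrt_sq_eq_abs]
    refine Real.sqrt_le_sqrt ?_
    have h1 : m0 u * g u ^ 2 ≤ 1 := by
      rw [← hg.1]
      exact Finset.single_le_sum (fun v _ => mul_nonneg (hm0 v).le (sq_nonneg _))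
        (Finset.mem_univ u)
    have h2 : g u ^ 2 ≤ (m0 u)⁻¹ := by
      rw [← mul_le_mul_iff_right₀ (hm0 u), mul_inv_cancel₀ (hm0 u).ne']
      exact h1
    refine h2.trans ?_
    exact Finset.single_le_sum (fun v _ => (inv_nonneg.2 (hm0 v).le)) (Finset.mem_univ u)
  have hcomp : IsCompact S := Metric.isCompact_of_isClosed_isBounded hclosed hbdd
  -- nonemptiness via the eigenvector
  obtain ⟨hne, ⟨f, hf0, hf⟩, hmin⟩ := hlam
  have hfc : ∑ u, m0 u * f u = 0 := eigen_centered G m0 m1 hm0 hne hf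
  have hfpos : 0 < ∑ u, m0 u * f u ^ 2 := ip_pos_of_ne m0 hm0 hf0
  set c := Real.sqrt (∑ u, m0 u * f u ^ 2) with hc
  have hcpos : 0 < c := Real.sqrt_pos.2 hfpos
  set fhat : V → ℝ := fun u => c⁻¹ * f u with hfhat
  have hfhatS : fhat ∈ S := by
    constructor
    · have : ∀ u, m0 u * (c⁻¹ * f u) ^ 2 = c⁻¹ ^ 2 * (m0 u * f u ^ 2) := fun u => by ring
      simp only [hfhat]
      rw [Finset.sum_congr rfl fun u _ => this u, ← Finset.mul_sum]
      rw [hc, ← Real.sqrt_inv]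
      rw [Real.sq_sqrt (by positivity)]
      field_simp
    · simp only [hfhat]
      have : ∀ u, m0 u * (c⁻¹ * f u) = c⁻¹ * (m0 u * f u) := fun u => by ring
      rw [Finset.sum_congr rfl fun u _ => this u, ← Finset.mul_sum, hfc, mul_zero]
  -- minimize
  obtain ⟨g₀, hg₀S, hg₀min⟩ := hcomp.exists_isMinOn ⟨fhat, hfhatS⟩
    ((edgeSq_continuous G m1).continuousOn)
  set mu := edgeSqS G m1 g₀ with hmu
  -- mu bound for all centered w
  have hbound : ∀ w : V → ℝ, (∑ u, m0 u * w u = 0) →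
      mu * ∑ u, m0 u * w u ^ 2 ≤ edgeSqS G m1 w := by
    intro w hw
    by_cases hww : (∑ u, m0 u * w u ^ 2) = 0
    · rw [hww, mul_zero]
      exact edgeSq_nonneg G m1 hm1 w
    · have hwpos : 0 < ∑ u, m0 u * w u ^ 2 := by
        rcases (Finset.sum_nonneg fun v _ =>
          mul_nonneg (hm0 v).le (sq_nonneg (w v))).lt_or_eq with h | h
        · exact h
        · exact absurd h.symm hww
      set cw := Real.sqrt (∑ u, m0 u * w u ^ 2) with hcw
      have hcwpos : 0 < cw := Real.sqrt_pos.2 hwpos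
      have hwhatS : (fun u => cw⁻¹ * w u) ∈ S := by
        constructor
        · have : ∀ u, m0 u * (cw⁻¹ * w u) ^ 2 = cw⁻¹ ^ 2 * (m0 u * w u ^ 2) :=
            fun u => by ring
          rw [Finset.sum_congr rfl fun u _ => this u, ← Finset.mul_sum,
            hcw, ← Real.sqrt_inv, Real.sq_sqrt (by positivity)]
          field_simp
        · have : ∀ u, m0 u * (cw⁻¹ * w u) = cw⁻¹ * (m0 u * w u) := fun u => by ring
          rw [Finset.sum_congr rfl fun u _ => this u, ← Finset.mul_sum, hw, mul_zero]
      have hmin' := hg₀min hwhatS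
      simp only [Set.mem_setOf_eq] at hmin'
      have hsc : edgeSqS G m1 (fun u => cw⁻¹ * w u) = cw⁻¹ ^ 2 * edgeSqS G m1 w := by
        have h := edgeSq_expand G m1 (fun _ => 0) w cw⁻¹
        simp only [zero_add] at h
        rw [h]
        have h0 : edgeSqS G m1 (fun _ : V => (0:ℝ)) = 0 := by
          refine Finset.sum_eq_zero fun e he => ?_
          induction e with
          | _ u v => simp [Sym2.lift_mk]
        have hbf : bform G m1 (fun _ : V => (0:ℝ)) w = 0 := by
          refine Finset.sum_eq_zero fun e he => ?_
          induction e with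
          | _ u v => simp [Sym2.lift_mk]
        rw [h0, hbf]
        ring
      rw [hsc] at hmin'
      have hcw2 : cw ^ 2 = ∑ u, m0 u * w u ^ 2 := Real.sq_sqrt hwpos.le
      calc mu * ∑ u, m0 u * w u ^ 2 = mu * cw ^ 2 := by rw [hcw2]
        _ ≤ (cw⁻¹ ^ 2 * edgeSqS G m1 w) * cw ^ 2 := by
            apply mul_le_mul_of_nonneg_right hmin' (sq_nonneg _)
        _ = edgeSqS G m1 w := by field_simp
  -- g₀ is an eigenvector for mu
  have hg₀eig : lapl G m0 m1 g₀ = fun u => mu * g₀ u := by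
    refine psd_eigen G m0 m1 hm0 mu hbound g₀ hg₀S.2 ?_
    rw [hg₀S.1, mul_one, hmu]
  -- mu ≠ 0 via connectivity
  have hg₀ne : g₀ ≠ 0 := by
    intro h0
    have := hg₀S.1
    rw [h0] at this
    simp at this
  have hmune : mu ≠ 0 := by
    intro h0
    have hQ0 : edgeSqS G m1 g₀ = 0 := by rw [← hmu, h0]
    have hconst := const_of_energy_zero G m1 hm1 hconn g₀ hQ0
    obtain ⟨u₀, hu₀⟩ := Function.ne_iff.1 hg₀ne
    have hu₀' : g₀ u₀ ≠ 0 := by simpa using hu₀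
    have hsum : ∑ u, m0 u * g₀ u = g₀ u₀ * ∑ u, m0 u := by
      rw [Finset.mul_sum]
      exact Finset.sum_congr rfl fun u _ => by rw [hconst u u₀]; ring
    have hM : 0 < ∑ u, m0 u :=
      Finset.sum_pos (fun u _ => hm0 u) ⟨u₀, Finset.mem_univ u₀⟩
    rw [hg₀S.2] at hsum
    exact hu₀' (by
      have := hsum.symm
      rcases mul_eq_zero.1 this with h | h
      · exact h
      · exact absurd h hM.ne')
  have h1 : lam ≤ mu := hmin mu hmune ⟨g₀, hg₀ne, hg₀eig⟩
  have h2 : mu ≤ lam := by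
    have := hg₀min hfhatS
    simp only [Set.mem_setOf_eq] at this
    have hsc : edgeSqS G m1 fhat = c⁻¹ ^ 2 * edgeSqS G m1 f := by
      have h := edgeSq_expand G m1 (fun _ => 0) f c⁻¹
      simp only [zero_add] at h
      rw [hfhat, h]
      have h0 : edgeSqS G m1 (fun _ : V => (0:ℝ)) = 0 := by
        refine Finset.sum_eq_zero fun e he => ?_
        induction e with
        | _ u v => simp [Sym2.lift_mk]
      have hbf : bform G m1 (fun _ : V => (0:ℝ)) f = 0 := by
        refine Finset.sum_eq_zero fun e he => ?_
        induction e with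
        | _ u v => simp [Sym2.lift_mk]
      rw [h0, hbf]; ring
    have hQf : edgeSqS G m1 f = lam * ∑ u, m0 u * f u ^ 2 :=
      eigen_energy G m0 m1 hm0 hf
    rw [hsc, hQf] at this
    have hc2 : c ^ 2 = ∑ u, m0 u * f u ^ 2 := Real.sq_sqrt hfpos.le
    calc mu ≤ c⁻¹ ^ 2 * (lam * ∑ u, m0 u * f u ^ 2) := this
      _ = lam := by rw [← hc2]; field_simp
  have hmueq : mu = lam := le_antisymm h2 h1
  intro g hg
  rw [← hmueq]
  exact hbound g hg

lemma rayleigh_eq (hm0 : ∀ u, 0 < m0 u) (hm1 : ∀ e, 0 ≤ m1 e)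
    (hconn : (posSub G m1).Connected) {lam : ℝ} (hlam : IsLambdaOne G m0 m1 lam)
    {g : V → ℝ} (hg : ∑ u, m0 u * g u = 0)
    (heq : edgeSqS G m1 g = lam * ∑ u, m0 u * g u ^ 2) :
    lapl G m0 m1 g = fun u => lam * g u :=
  psd_eigen G m0 m1 hm0 lam (rayleigh G m0 m1 hm0 hm1 hconn hlam) g hg heq

variable {n : ℕ}

lemma normsq (x : EuclideanSpace ℝ (Fin n)) : ‖x‖ ^ 2 = ∑ i, x i ^ 2 := by
  rw [EuclideanSpace.norm_eq, Real.sq_sqrt (by positivity)]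
  simp [sq_abs]

lemma bar_apply (φ : V → EuclideanSpace ℝ (Fin n)) (i : Fin n) :
    bar m0 φ i = (1 / ∑ u, m0 u) * ∑ u, m0 u * φ u i := by
  rw [bar, PiLp.smul_apply, WithLp.ofLp_sum, Finset.sum_apply]
  simp only [PiLp.smul_apply, smul_eq_mul]

lemma edgeNormSq_eq (φ : V → EuclideanSpace ℝ (Fin n)) :
    edgeNormSq G m1 φ = ∑ i, edgeSqS G m1 (fun u => φ u i) := by
  rw [edgeNormSq]
  have hterm : ∀ e ∈ G.edgeFinset,
      m1 e * Sym2.lift ⟨fun u v => ‖φ u - φ v‖ ^ 2,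
        fun u v => by simp only [norm_sub_rev (φ u) (φ v)]⟩ e
      = ∑ i, m1 e * Sym2.lift ⟨fun u v => ((fun w => φ w i) u - (fun w => φ w i) v) ^ 2,
          fun u v => by simp only []; ring⟩ e := by
    intro e he
    induction e with
    | _ u v =>
      simp only [Sym2.lift_mk]
      rw [normsq, Finset.mul_sum]
      refine Finset.sum_congr rfl fun i _ => ?_
      rw [PiLp.sub_apply]
  rw [Finset.sum_congr rfl hterm, Finset.sum_comm]
  rfl

lemma swap_m0 (φ : V → EuclideanSpace ℝ (Fin n)) :
    ∑ i, ∑ u, m0 u * φ u i ^ 2 = ∑ u, m0 u * ‖φ u‖ ^ 2 := by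
  rw [Finset.sum_comm]
  refine Finset.sum_congr rfl fun u _ => ?_
  rw [normsq, Finset.mul_sum]

lemma var_ident (g : V → ℝ) (k : ℝ) (hk : ∑ u, m0 u * g u = (∑ u, m0 u) * k) :
    ∑ u, m0 u * (g u - k) ^ 2 = ∑ u, m0 u * g u ^ 2 - (∑ u, m0 u) * k ^ 2 := by
  have h : ∀ u, m0 u * (g u - k) ^ 2
      = m0 u * g u ^ 2 - 2 * k * (m0 u * g u) + k ^ 2 * m0 u := fun u => by ring
  rw [Finset.sum_congr rfl fun u _ => h u, Finset.sum_add_distrib,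
    Finset.sum_sub_distrib, ← Finset.mul_sum, ← Finset.mul_sum, hk]
  ring

end DeltaProof

open DeltaProof

/-- equality `δ = 1 − (D²/M)/λ₁` holds iff there is a feasible `φ`
satisfying the complementarity condition (i) and the eigenmap condition (ii). -/
theorem delta_eq_iff {V : Type*} [Fintype V] [Nonempty V]
    (G : SimpleGraph V) [DecidableRel G.Adj] (hG : G.Connected)
    (m0 : V → ℝ) (hm0 : ∀ u, 0 < m0 u)
    (d : Sym2 V → ℝ) (hd : ∀ e ∈ G.edgeSet, 0 < d e)
    (m1 : Sym2 V → ℝ) (hm1 : ∀ e, 0 ≤ m1 e) (hconn : (posSub G m1).Connected)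
    (hnorm : ∑ e ∈ G.edgeFinset, m1 e * d e ^ 2 = ∑ e ∈ G.edgeFinset, d e ^ 2)
    (lam : ℝ) (hlam : IsLambdaOne G m0 m1 lam) :
    sInf (deltaSet G m0 d) =
        1 - ((∑ e ∈ G.edgeFinset, d e ^ 2) / (∑ u, m0 u)) / lam ↔
      ∃ φ : V → EuclideanSpace ℝ (Fin (Fintype.card V)),
        (∑ u, m0 u * ‖φ u‖ ^ 2) = (∑ u, m0 u) ∧
        (∀ u v, G.Adj u v → ‖φ u - φ v‖ ≤ d s(u, v)) ∧
        (∀ u v, G.Adj u v → m1 s(u, v) * (d s(u, v) ^ 2 - ‖φ u - φ v‖ ^ 2) = 0) ∧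
        (∀ i, lapl G m0 m1 (fun u => φ u i) =
          fun u => lam * (φ u i - bar m0 φ i)) := by
  classical
  have hMpos : 0 < ∑ u, m0 u := Finset.sum_pos (fun u _ => hm0 u) Finset.univ_nonempty
  have hlampos : 0 < lam := lam_pos G m0 m1 hm0 hm1 hlam
  have hMlam : (0:ℝ) < (∑ u, m0 u) * lam := mul_pos hMpos hlampos
  have hbar_sum : ∀ (φ : V → EuclideanSpace ℝ (Fin (Fintype.card V))) (i : Fin (Fintype.card V)),
      ∑ u, m0 u * φ u i = (∑ u, m0 u) * bar m0 φ i := by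
    intro φ i
    rw [bar_apply m0 φ i]
    field_simp
  have hcent : ∀ (φ : V → EuclideanSpace ℝ (Fin (Fintype.card V))) (i : Fin (Fintype.card V)),
      ∑ u, m0 u * (φ u i - bar m0 φ i) = 0 := by
    intro φ i
    have hexp : ∀ u, m0 u * (φ u i - bar m0 φ i)
        = m0 u * φ u i - m0 u * bar m0 φ i := fun u => by ring
    rw [Finset.sum_congr rfl fun u _ => hexp u, Finset.sum_sub_distrib,
      ← Finset.sum_mul, hbar_sum φ i]
    ring
  have hvar : ∀ (φ : V → EuclideanSpace ℝ (Fin (Fintype.card V))),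
      (∑ u, m0 u * ‖φ u‖ ^ 2) = (∑ u, m0 u) →
      ∑ i, ∑ u, m0 u * (φ u i - bar m0 φ i) ^ 2
        = (∑ u, m0 u) - (∑ u, m0 u) * ‖bar m0 φ‖ ^ 2 := by
    intro φ hφ
    have h1 : ∀ i : Fin (Fintype.card V), ∑ u, m0 u * (φ u i - bar m0 φ i) ^ 2
        = ∑ u, m0 u * φ u i ^ 2 - (∑ u, m0 u) * bar m0 φ i ^ 2 :=
      fun i => var_ident m0 (fun u => φ u i) (bar m0 φ i) (hbar_sum φ i)
    rw [Finset.sum_congr rfl fun i _ => h1 i, Finset.sum_sub_distrib,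
      swap_m0 m0 φ, hφ, ← Finset.mul_sum, ← normsq]
  -- lower bound on deltaSet
  have hLB : ∀ r ∈ deltaSet G m0 d,
      1 - (∑ e ∈ G.edgeFinset, d e ^ 2) / (∑ u, m0 u) / lam ≤ r := by
    rintro r ⟨φ, h1, h2, rfl⟩
    have hENS : edgeNormSq G m1 φ ≤ ∑ e ∈ G.edgeFinset, d e ^ 2 := by
      rw [← hnorm]
      refine Finset.sum_le_sum fun e he => ?_
      induction e with
      | _ u v =>
        simp only [Sym2.lift_mk]
        have hadj : G.Adj u v := by
          rw [SimpleGraph.mem_edgeFinset] at he; exact he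
        refine mul_le_mul_of_nonneg_left ?_ (hm1 _)
        exact pow_le_pow_left₀ (norm_nonneg _) (h2 u v hadj) 2
    have hray : lam * ((∑ u, m0 u) - (∑ u, m0 u) * ‖bar m0 φ‖ ^ 2)
        ≤ edgeNormSq G m1 φ := by
      rw [← hvar φ h1, Finset.mul_sum, edgeNormSq_eq G m1 φ]
      refine Finset.sum_le_sum fun i _ => ?_
      have := rayleigh G m0 m1 hm0 hm1 hconn hlam
        (fun u => φ u i - bar m0 φ i) (hcent φ i)
      rwa [edgeSq_shift G m1 (fun u => φ u i) (bar m0 φ i)] at this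
    have hkey : lam * ((∑ u, m0 u) - (∑ u, m0 u) * ‖bar m0 φ‖ ^ 2)
        ≤ ∑ e ∈ G.edgeFinset, d e ^ 2 := hray.trans hENS
    have h' : 1 - ‖bar m0 φ‖ ^ 2
        ≤ (∑ e ∈ G.edgeFinset, d e ^ 2) / ((∑ u, m0 u) * lam) := by
      rw [le_div_iff₀ hMlam]
      nlinarith [hkey]
    rw [div_div]
    linarith
  -- value formula for complementary eigen-maps
  have hVAL : ∀ (φ : V → EuclideanSpace ℝ (Fin (Fintype.card V))),
      (∑ u, m0 u * ‖φ u‖ ^ 2) = (∑ u, m0 u) →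
      (∀ u v, G.Adj u v → m1 s(u, v) * (d s(u, v) ^ 2 - ‖φ u - φ v‖ ^ 2) = 0) →
      (∀ i, lapl G m0 m1 (fun u => φ u i) =
        fun u => lam * (φ u i - bar m0 φ i)) →
      ‖bar m0 φ‖ ^ 2
        = 1 - (∑ e ∈ G.edgeFinset, d e ^ 2) / (∑ u, m0 u) / lam := by
    intro φ h1 h3 h4
    have hQi : ∀ i : Fin (Fintype.card V), edgeSqS G m1 (fun u => φ u i)
        = lam * (∑ u, m0 u * φ u i ^ 2 - (∑ u, m0 u) * bar m0 φ i ^ 2) := by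
      intro i
      rw [← lapl_self G m0 m1 hm0 (fun u => φ u i), h4 i]
      have : ∀ u, m0 u * (lam * (φ u i - bar m0 φ i) * φ u i)
          = lam * (m0 u * φ u i ^ 2) - lam * bar m0 φ i * (m0 u * φ u i) :=
        fun u => by ring
      rw [Finset.sum_congr rfl fun u _ => this u, Finset.sum_sub_distrib,
        ← Finset.mul_sum, ← Finset.mul_sum, hbar_sum φ i]
      ring
    have hQtot : edgeNormSq G m1 φ
        = lam * ((∑ u, m0 u) - (∑ u, m0 u) * ‖bar m0 φ‖ ^ 2) := by
      rw [edgeNormSq_eq G m1 φ, Finset.sum_congr rfl fun i _ => hQi i,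
        ← Finset.mul_sum, Finset.sum_sub_distrib, swap_m0 m0 φ, h1,
        ← Finset.mul_sum, ← normsq]
    have hQD : edgeNormSq G m1 φ = ∑ e ∈ G.edgeFinset, d e ^ 2 := by
      rw [← hnorm, edgeNormSq]
      refine Finset.sum_congr rfl fun e he => ?_
      induction e with
      | _ u v =>
        simp only [Sym2.lift_mk]
        have hadj : G.Adj u v := by
          rw [SimpleGraph.mem_edgeFinset] at he; exact he
        have := h3 u v hadj
        nlinarith [this]
    have h5 : lam * ((∑ u, m0 u) - (∑ u, m0 u) * ‖bar m0 φ‖ ^ 2)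
        = ∑ e ∈ G.edgeFinset, d e ^ 2 := by rw [← hQtot, hQD]
    have hx : (∑ e ∈ G.edgeFinset, d e ^ 2) / ((∑ u, m0 u) * lam)
        = 1 - ‖bar m0 φ‖ ^ 2 := by
      rw [div_eq_iff hMlam.ne']
      linear_combination -h5
    rw [div_div, hx]
    ring
  constructor
  · -- forward: equality implies existence
    intro heq
    set F : Set (V → EuclideanSpace ℝ (Fin (Fintype.card V))) :=
      {φ | (∑ u, m0 u * ‖φ u‖ ^ 2) = (∑ u, m0 u) ∧
        ∀ u v, G.Adj u v → ‖φ u - φ v‖ ≤ d s(u, v)} with hF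
    have hn0 : 0 < Fintype.card V := Fintype.card_pos
    have hFne : F.Nonempty := by
      refine ⟨fun _ => EuclideanSpace.single ⟨0, hn0⟩ (1:ℝ), ?_, ?_⟩
      · simp [EuclideanSpace.norm_single]
      · intro u v hadj
        simp only [sub_self, norm_zero]
        exact (hd _ ((SimpleGraph.mem_edgeSet G).2 hadj)).le
    have hFclosed : IsClosed F := by
      have hc1 : IsClosed {φ : V → EuclideanSpace ℝ (Fin (Fintype.card V)) |
          (∑ u, m0 u * ‖φ u‖ ^ 2) = (∑ u, m0 u)} :=
        isClosed_eq (continuous_finset_sum _ fun u _ =>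
          continuous_const.mul (((continuous_apply u).norm).pow 2)) continuous_const
      have hc2 : IsClosed {φ : V → EuclideanSpace ℝ (Fin (Fintype.card V)) |
          ∀ u v, G.Adj u v → ‖φ u - φ v‖ ≤ d s(u, v)} := by
        simp only [Set.setOf_forall]
        exact isClosed_iInter fun u => isClosed_iInter fun v => isClosed_iInter fun _ =>
          isClosed_le (((continuous_apply u).sub (continuous_apply v)).norm)
            continuous_const
      exact hc1.inter hc2
    have hFbdd : Bornology.IsBounded F := by
      refine (Metric.isBounded_closedBall
        (x := (0 : V → EuclideanSpace ℝ (Fin (Fintype.card V))))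
        (r := Real.sqrt ((∑ u, m0 u) * ∑ u, (m0 u)⁻¹))).subset ?_
      intro φ hφ
      rw [Metric.mem_closedBall, dist_zero_right]
      refine (pi_norm_le_iff_of_nonneg (Real.sqrt_nonneg _)).2 fun u => ?_
      rw [show ‖φ u‖ = |‖φ u‖| from (abs_of_nonneg (norm_nonneg _)).symm,
        ← Real.sqrt_sq_eq_abs]
      refine Real.sqrt_le_sqrt ?_
      have h1 : m0 u * ‖φ u‖ ^ 2 ≤ ∑ v, m0 v := by
        rw [← hφ.1]
        exact Finset.single_le_sum (f := fun v => m0 v * ‖φ v‖ ^ 2)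
          (fun v _ => mul_nonneg (hm0 v).le (sq_nonneg _)) (Finset.mem_univ u)
      have h2 : ‖φ u‖ ^ 2 ≤ (∑ v, m0 v) * (m0 u)⁻¹ := by
        rw [← mul_le_mul_iff_right₀ (hm0 u)]
        calc m0 u * ‖φ u‖ ^ 2 ≤ ∑ v, m0 v := h1
          _ = m0 u * ((∑ v, m0 v) * (m0 u)⁻¹) := by
              rw [mul_comm ((∑ v, m0 v)) ((m0 u)⁻¹), ← mul_assoc,
                mul_inv_cancel₀ (hm0 u).ne', one_mul]
      refine h2.trans ?_
      refine mul_le_mul_of_nonneg_left ?_ hMpos.le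
      exact Finset.single_le_sum (fun v _ => (inv_nonneg.2 (hm0 v).le))
        (Finset.mem_univ u)
    have hFcomp : IsCompact F := Metric.isCompact_of_isClosed_isBounded hFclosed hFbdd
    have hObj : Continuous
        fun ψ : V → EuclideanSpace ℝ (Fin (Fintype.card V)) => ‖bar m0 ψ‖ ^ 2 := by
      have hbarc : Continuous
          fun ψ : V → EuclideanSpace ℝ (Fin (Fintype.card V)) => bar m0 ψ := by
        unfold bar
        exact (continuous_finset_sum (f := fun u (ψ : V → EuclideanSpace ℝ (Fin (Fintype.card V))) => m0 u • ψ u) _ fun u _ =>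
          (continuous_apply u).const_smul (m0 u)).const_smul (1 / ∑ u, m0 u)
      exact (hbarc.norm).pow 2
    obtain ⟨φ₀, hφ₀F, hminOn⟩ := hFcomp.exists_isMinOn hFne hObj.continuousOn
    have hInf : sInf (deltaSet G m0 d) = ‖bar m0 φ₀‖ ^ 2 := by
      refine IsLeast.csInf_eq ⟨⟨φ₀, hφ₀F.1, hφ₀F.2, rfl⟩, ?_⟩
      rintro r ⟨ψ, k1, k2, rfl⟩
      exact isMinOn_iff.1 hminOn ψ ⟨k1, k2⟩
    have hval₀ : ‖bar m0 φ₀‖ ^ 2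
        = 1 - (∑ e ∈ G.edgeFinset, d e ^ 2) / (∑ u, m0 u) / lam := by
      rw [← hInf, heq, div_div]
    -- the total slack is zero
    have hENS : edgeNormSq G m1 φ₀ ≤ ∑ e ∈ G.edgeFinset, d e ^ 2 := by
      rw [← hnorm]
      refine Finset.sum_le_sum fun e he => ?_
      induction e with
      | _ u v =>
        simp only [Sym2.lift_mk]
        have hadj : G.Adj u v := by
          rw [SimpleGraph.mem_edgeFinset] at he; exact he
        refine mul_le_mul_of_nonneg_left ?_ (hm1 _)
        exact pow_le_pow_left₀ (norm_nonneg _) (hφ₀F.2 u v hadj) 2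
    have hDval : lam * ((∑ u, m0 u) - (∑ u, m0 u) * ‖bar m0 φ₀‖ ^ 2)
        = ∑ e ∈ G.edgeFinset, d e ^ 2 := by
      rw [hval₀]
      field_simp
      ring
    have hA : ∑ i, edgeSqS G m1 (fun u => φ₀ u i - bar m0 φ₀ i)
        = edgeNormSq G m1 φ₀ := by
      rw [edgeNormSq_eq G m1 φ₀]
      exact Finset.sum_congr rfl fun i _ =>
        edgeSq_shift G m1 (fun u => φ₀ u i) (bar m0 φ₀ i)
    have hray_i : ∀ i : Fin (Fintype.card V),
        lam * ∑ u, m0 u * (φ₀ u i - bar m0 φ₀ i) ^ 2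
          ≤ edgeSqS G m1 (fun u => φ₀ u i - bar m0 φ₀ i) :=
      fun i => rayleigh G m0 m1 hm0 hm1 hconn hlam _ (hcent φ₀ i)
    have hsum_slack : ∑ i, (edgeSqS G m1 (fun u => φ₀ u i - bar m0 φ₀ i)
        - lam * ∑ u, m0 u * (φ₀ u i - bar m0 φ₀ i) ^ 2)
        = edgeNormSq G m1 φ₀ - lam * ((∑ u, m0 u) - (∑ u, m0 u) * ‖bar m0 φ₀‖ ^ 2) := by
      rw [Finset.sum_sub_distrib, hA, ← Finset.mul_sum, hvar φ₀ hφ₀F.1]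
    have hslack_nonneg : 0 ≤ edgeNormSq G m1 φ₀
        - lam * ((∑ u, m0 u) - (∑ u, m0 u) * ‖bar m0 φ₀‖ ^ 2) := by
      rw [← hsum_slack]
      exact Finset.sum_nonneg fun i _ => sub_nonneg.2 (hray_i i)
    have hEQ : edgeNormSq G m1 φ₀ = ∑ e ∈ G.edgeFinset, d e ^ 2 := by
      rw [hDval] at hslack_nonneg
      linarith
    have hslack_zero : ∑ i, (edgeSqS G m1 (fun u => φ₀ u i - bar m0 φ₀ i)
        - lam * ∑ u, m0 u * (φ₀ u i - bar m0 φ₀ i) ^ 2) = 0 := by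
      rw [hsum_slack, hDval, hEQ]
      ring
    have heach : ∀ i : Fin (Fintype.card V),
        edgeSqS G m1 (fun u => φ₀ u i - bar m0 φ₀ i)
          = lam * ∑ u, m0 u * (φ₀ u i - bar m0 φ₀ i) ^ 2 := by
      intro i
      have := (Finset.sum_eq_zero_iff_of_nonneg
        (fun i _ => sub_nonneg.2 (hray_i i))).1 hslack_zero i (Finset.mem_univ i)
      linarith
    refine ⟨φ₀, hφ₀F.1, hφ₀F.2, ?_, ?_⟩
    · -- complementarity
      intro u v hadj
      have hle : ∀ e ∈ G.edgeFinset,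
          m1 e * Sym2.lift ⟨fun u v => ‖φ₀ u - φ₀ v‖ ^ 2,
            fun u v => by simp only [norm_sub_rev (φ₀ u) (φ₀ v)]⟩ e
          ≤ m1 e * d e ^ 2 := by
        intro e he
        induction e with
        | _ u v =>
          simp only [Sym2.lift_mk]
          have hadj' : G.Adj u v := by
            rw [SimpleGraph.mem_edgeFinset] at he; exact he
          refine mul_le_mul_of_nonneg_left ?_ (hm1 _)
          exact pow_le_pow_left₀ (norm_nonneg _) (hφ₀F.2 u v hadj') 2
      have hsum_eq : ∑ e ∈ G.edgeFinset,
          m1 e * Sym2.lift ⟨fun u v => ‖φ₀ u - φ₀ v‖ ^ 2,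
            fun u v => by simp only [norm_sub_rev (φ₀ u) (φ₀ v)]⟩ e
          = ∑ e ∈ G.edgeFinset, m1 e * d e ^ 2 := by
        rw [← edgeNormSq, hEQ, hnorm]
      have hterm := (Finset.sum_eq_sum_iff_of_le hle).1 hsum_eq
      have hmem : s(u, v) ∈ G.edgeFinset := by
        rw [SimpleGraph.mem_edgeFinset]; exact hadj
      have := hterm _ hmem
      simp only [Sym2.lift_mk] at this
      linarith
    · -- eigenmap
      intro i
      have h7 := rayleigh_eq G m0 m1 hm0 hm1 hconn hlam (hcent φ₀ i) (heach i)
      have h8 := lapl_shift G m0 m1 (fun u => φ₀ u i) (bar m0 φ₀ i)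
      funext u
      calc lapl G m0 m1 (fun u => φ₀ u i) u
          = lapl G m0 m1 (fun u => φ₀ u i - bar m0 φ₀ i) u := (congrFun h8 u).symm
        _ = lam * (φ₀ u i - bar m0 φ₀ i) := congrFun h7 u
  · -- reverse: existence implies equality
    rintro ⟨φ, h1, h2, h3, h4⟩
    have hval := hVAL φ h1 h3 h4
    have hLeast : IsLeast (deltaSet G m0 d)
        (1 - (∑ e ∈ G.edgeFinset, d e ^ 2) / (∑ u, m0 u) / lam) :=
      ⟨⟨φ, h1, h2, hval.symm⟩, hLB⟩
    rw [hLeast.csInf_eq, div_div]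
end

section
/- If ν(G,m₀,d) ≤ 1 then δ(G,m₀,d) ≤ 1 − ν(G,m₀,d); hence together with the reverse inequality, δ(G,m₀,d) = max{1 − ν(G,m₀,d), 0}. -/
open Finset
open scoped Classical

section aux
variable {V : Type*} [Fintype V] {n : ℕ} {G : SimpleGraph V} [DecidableRel G.Adj]

lemma walk_norm_bound (d : Sym2 V → ℝ) {u v : V} (w : G.Walk u v)
    (φ : V → EuclideanSpace ℝ (Fin n))
    (h : ∀ a b, G.Adj a b → ‖φ a - φ b‖ ≤ d s(a, b)) :
    ‖φ u - φ v‖ ≤ (w.darts.map (fun dr => d s(dr.fst, dr.snd))).sum := by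
  induction w with
  | nil => simp
  | @cons a b c hab p ih =>
    simp only [SimpleGraph.Walk.darts_cons, List.map_cons, List.sum_cons]
    calc ‖φ a - φ c‖ ≤ ‖φ a - φ b‖ + ‖φ b - φ c‖ := norm_sub_le_norm_sub_add_norm_sub _ _ _
    _ ≤ d s(a, b) + (p.darts.map (fun dr => d s(dr.fst, dr.snd))).sum :=
        add_le_add (h a b hab) ih

lemma exists_pair_bound (hG : G.Connected) (d : Sym2 V → ℝ) :
    ∃ C : ℝ, ∀ (φ : V → EuclideanSpace ℝ (Fin n)),
      (∀ a b, G.Adj a b → ‖φ a - φ b‖ ≤ d s(a, b)) → ∀ u v, ‖φ u - φ v‖ ≤ C := by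
  classical
  set Cw : V → V → ℝ := fun u v =>
    (((hG.preconnected u v).some.darts.map (fun dr => d s(dr.fst, dr.snd))).sum) with hCw
  refine ⟨∑ u, ∑ v, |Cw u v|, fun φ hφ u v => ?_⟩
  have h1 : ‖φ u - φ v‖ ≤ Cw u v := walk_norm_bound d _ φ hφ
  have h2 : Cw u v ≤ |Cw u v| := le_abs_self _
  have h3 : |Cw u v| ≤ ∑ v, |Cw u v| :=
    Finset.single_le_sum (f := fun w => |Cw u w|) (fun i _ => abs_nonneg _) (Finset.mem_univ v)
  have h4 : (∑ v, |Cw u v|) ≤ ∑ u, ∑ v, |Cw u v| :=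
    Finset.single_le_sum (f := fun u => ∑ v, |Cw u v|)
      (fun i _ => Finset.sum_nonneg fun _ _ => abs_nonneg _) (Finset.mem_univ u)
  linarith

end aux


/-- if `ν ≤ 1` then `δ ≤ 1 − ν`; hence `δ = max{1 − ν, 0}`. -/
theorem delta_eq_max {V : Type*} [Fintype V] [Nonempty V]
    (G : SimpleGraph V) [DecidableRel G.Adj] (hG : G.Connected)
    (m0 : V → ℝ) (hm0 : ∀ u, 0 < m0 u)
    (d : Sym2 V → ℝ) (hd : ∀ e ∈ G.edgeSet, 0 < d e)
    (hcard : 2 ≤ Fintype.card V)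
    (hnu : sSup (nuSet G m0 d) ∈ nuSet G m0 d)
    (hdelta : sInf (deltaSet G m0 d) ∈ deltaSet G m0 d) :
    (sSup (nuSet G m0 d) ≤ 1 →
      sInf (deltaSet G m0 d) ≤ 1 - sSup (nuSet G m0 d)) ∧
    sInf (deltaSet G m0 d) = max (1 - sSup (nuSet G m0 d)) 0 := by
  classical
  have hcpos : 0 < Fintype.card V := by omega
  have hMpos : 0 < ∑ u, m0 u := Finset.sum_pos (fun u _ => hm0 u) Finset.univ_nonempty
  have hMne : (∑ u, m0 u) ≠ 0 := ne_of_gt hMpos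
  have hd' : ∀ u v, G.Adj u v → 0 ≤ d s(u, v) := fun u v h =>
    (hd _ ((SimpleGraph.mem_edgeSet G).2 h)).le
  obtain ⟨C, hC⟩ := exists_pair_bound (n := Fintype.card V) hG d
  -- nuSet is bounded above
  have hnuBdd : BddAbove (nuSet G m0 d) := by
    refine ⟨C ^ 2, fun r hr => ?_⟩
    obtain ⟨φ, hc, he, hv⟩ := hr
    have hnorm : ∀ u, ‖φ u‖ ≤ C := by
      intro u
      have key : (∑ v, m0 v) • φ u = ∑ v, m0 v • (φ u - φ v) := by
        simp only [smul_sub, Finset.sum_sub_distrib, hc, sub_zero, Finset.sum_smul]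
      have h2 : (∑ u, m0 u) * ‖φ u‖ ≤ ∑ v, m0 v * C := by
        calc (∑ u, m0 u) * ‖φ u‖ = ‖(∑ v, m0 v) • φ u‖ := by
              rw [norm_smul, Real.norm_eq_abs, abs_of_pos hMpos]
          _ = ‖∑ v, m0 v • (φ u - φ v)‖ := by rw [key]
          _ ≤ ∑ v, ‖m0 v • (φ u - φ v)‖ := norm_sum_le _ _
          _ ≤ ∑ v, m0 v * C := by
              refine Finset.sum_le_sum fun v _ => ?_
              rw [norm_smul, Real.norm_eq_abs, abs_of_pos (hm0 v)]
              exact mul_le_mul_of_nonneg_left (hC φ he u v) (hm0 v).le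
      rw [← Finset.sum_mul] at h2
      exact le_of_mul_le_mul_left h2 hMpos
    have hC0 : 0 ≤ C := le_trans (norm_nonneg _) (hnorm (Classical.arbitrary V))
    have hsum : ∑ u, m0 u * ‖φ u‖ ^ 2 ≤ (∑ u, m0 u) * C ^ 2 := by
      rw [Finset.sum_mul]
      refine Finset.sum_le_sum fun u _ => ?_
      exact mul_le_mul_of_nonneg_left (pow_le_pow_left₀ (norm_nonneg _) (hnorm u) 2) (hm0 u).le
    rw [hv, one_div, inv_mul_le_iff₀ hMpos]
    exact hsum
  have hdeltaBdd : BddBelow (deltaSet G m0 d) := by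
    refine ⟨0, fun r hr => ?_⟩
    obtain ⟨ψ, -, -, hv⟩ := hr
    rw [hv]; positivity
  -- 0 ∈ nuSet
  have h0nu : (0 : ℝ) ∈ nuSet G m0 d := by
    refine ⟨0, by simp, fun u v h => ?_, by simp⟩
    simpa using hd' u v h
  have hν0 : 0 ≤ sSup (nuSet G m0 d) := le_csSup hnuBdd h0nu
  obtain ⟨φ, hφc, hφe, hφv⟩ := hnu
  obtain ⟨ψ, hψn, hψe, hψv⟩ := hdelta
  have hδ0 : 0 ≤ sInf (deltaSet G m0 d) := by rw [hψv]; positivity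
  have hφsum : ∑ u, m0 u * ‖φ u‖ ^ 2 = (∑ u, m0 u) * sSup (nuSet G m0 d) := by
    rw [hφv]; field_simp
  -- reverse inequality : 1 - δ ≤ ν
  have hrev : 1 - sInf (deltaSet G m0 d) ≤ sSup (nuSet G m0 d) := by
    refine le_csSup hnuBdd ?_
    set b := bar m0 ψ with hb
    have hS : ∑ u, m0 u • ψ u = (∑ u, m0 u) • b := by
      rw [hb, bar, smul_smul]; field_simp; rw [one_smul]
    refine ⟨fun u => ψ u - b, ?_, ?_, ?_⟩
    · simp only [smul_sub, Finset.sum_sub_distrib, hS, ← Finset.sum_smul, sub_self]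
    · intro u v h; simpa using hψe u v h
    · have hinner : ∑ u, m0 u * (inner ℝ (ψ u) b : ℝ) = (∑ u, m0 u) * ‖b‖ ^ 2 := by
        have : ∑ u, m0 u * (inner ℝ (ψ u) b : ℝ) = (inner ℝ (∑ u, m0 u • ψ u) b : ℝ) := by
          rw [sum_inner]
          exact Finset.sum_congr rfl fun u _ => (real_inner_smul_left _ _ _).symm
        rw [this, hS, real_inner_smul_left, real_inner_self_eq_norm_sq]
      have hexp : ∑ u, m0 u * ‖ψ u - b‖ ^ 2 = (∑ u, m0 u) * (1 - ‖b‖ ^ 2) := by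
        have h1 : ∀ u, m0 u * ‖ψ u - b‖ ^ 2
            = m0 u * ‖ψ u‖ ^ 2 - 2 * (m0 u * (inner ℝ (ψ u) b : ℝ)) + m0 u * ‖b‖ ^ 2 := by
          intro u
          rw [norm_sub_sq_real (ψ u) b]; ring
        rw [Finset.sum_congr rfl fun u _ => h1 u, Finset.sum_add_distrib,
          Finset.sum_sub_distrib, ← Finset.mul_sum, hinner, ← Finset.sum_mul, hψn]
        ring
      rw [hψv, hexp]
      field_simp
  -- the special unit vector
  set e : EuclideanSpace ℝ (Fin (Fintype.card V)) :=
    EuclideanSpace.single (⟨0, hcpos⟩ : Fin (Fintype.card V)) (1 : ℝ) with hedef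
  have he1 : ‖e‖ = 1 := by rw [hedef, EuclideanSpace.norm_single]; simp
  -- forward inequality
  have hforward : sSup (nuSet G m0 d) ≤ 1 →
      sInf (deltaSet G m0 d) ≤ 1 - sSup (nuSet G m0 d) := by
    intro hν1
    set t := Real.sqrt (1 - sSup (nuSet G m0 d)) with ht
    have ht0 : 0 ≤ t := Real.sqrt_nonneg _
    have ht2 : t ^ 2 = 1 - sSup (nuSet G m0 d) := Real.sq_sqrt (by linarith)
    refine csInf_le hdeltaBdd ?_
    refine ⟨fun u => φ u + t • e, ?_, ?_, ?_⟩
    · have hinner : ∑ u, m0 u * (inner ℝ (φ u) (t • e) : ℝ) = 0 := by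
        have : ∑ u, m0 u * (inner ℝ (φ u) (t • e) : ℝ)
            = (inner ℝ (∑ u, m0 u • φ u) (t • e) : ℝ) := by
          rw [sum_inner]
          exact Finset.sum_congr rfl fun u _ => (real_inner_smul_left _ _ _).symm
        rw [this, hφc, inner_zero_left]
      have hte : ‖t • e‖ ^ 2 = t ^ 2 := by
        rw [norm_smul, Real.norm_eq_abs, abs_of_nonneg ht0, he1, mul_one]
      have h1 : ∀ u, m0 u * ‖φ u + t • e‖ ^ 2
          = m0 u * ‖φ u‖ ^ 2 + 2 * (m0 u * (inner ℝ (φ u) (t • e) : ℝ)) + m0 u * t ^ 2 := by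
        intro u
        rw [norm_add_sq_real (φ u) (t • e), hte]; ring
      rw [Finset.sum_congr rfl fun u _ => h1 u, Finset.sum_add_distrib,
        Finset.sum_add_distrib, ← Finset.mul_sum, hinner, ← Finset.sum_mul, hφsum, ht2]
      ring
    · intro u v h
      simpa using hφe u v h
    · have hbar : bar m0 (fun u => φ u + t • e) = t • e := by
        rw [bar]
        have : ∑ u, m0 u • (φ u + t • e) = (∑ u, m0 u) • (t • e) := by
          simp only [smul_add, Finset.sum_add_distrib, hφc, zero_add, ← Finset.sum_smul]
        rw [this, smul_smul]
        field_simp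
        rw [one_smul]
      rw [hbar, norm_smul, Real.norm_eq_abs, abs_of_nonneg ht0, he1, mul_one, ht2]
  refine ⟨hforward, ?_⟩
  rcases le_or_gt (sSup (nuSet G m0 d)) 1 with h1 | h1
  · rw [max_eq_left (by linarith)]
    exact le_antisymm (hforward h1) (by linarith)
  · rw [max_eq_right (by linarith)]
    -- 0 ∈ deltaSet via scaling
    have hνpos : 0 < sSup (nuSet G m0 d) := by linarith
    set s := (Real.sqrt (sSup (nuSet G m0 d)))⁻¹ with hs
    have hsq1 : 1 ≤ Real.sqrt (sSup (nuSet G m0 d)) := by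
      rw [show (1:ℝ) = Real.sqrt 1 by simp]
      exact Real.sqrt_le_sqrt (by linarith)
    have hspos : 0 < s := inv_pos.2 (by linarith)
    have hs1 : s ≤ 1 := by
      rw [hs]
      exact inv_le_one_of_one_le₀ hsq1
    have hs2 : s ^ 2 * sSup (nuSet G m0 d) = 1 := by
      rw [hs, inv_pow, Real.sq_sqrt hνpos.le]
      field_simp
    have h0delta : (0 : ℝ) ∈ deltaSet G m0 d := by
      refine ⟨fun u => s • φ u, ?_, ?_, ?_⟩
      · have h1 : ∀ u, m0 u * ‖s • φ u‖ ^ 2 = s ^ 2 * (m0 u * ‖φ u‖ ^ 2) := by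
          intro u
          rw [norm_smul, Real.norm_eq_abs, abs_of_pos hspos]; ring
        rw [Finset.sum_congr rfl fun u _ => h1 u, ← Finset.mul_sum, hφsum, mul_left_comm, hs2, mul_one]
      · intro u v h
        have : ‖s • φ u - s • φ v‖ = s * ‖φ u - φ v‖ := by
          rw [← smul_sub, norm_smul, Real.norm_eq_abs, abs_of_pos hspos]
        rw [this]
        calc s * ‖φ u - φ v‖ ≤ 1 * ‖φ u - φ v‖ :=
              mul_le_mul_of_nonneg_right hs1 (norm_nonneg _)
          _ = ‖φ u - φ v‖ := one_mul _
          _ ≤ d s(u, v) := hφe u v h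
      · have : bar m0 (fun u => s • φ u) = 0 := by
          rw [bar]
          have h2 : ∑ u, m0 u • s • φ u = s • ∑ u, m0 u • φ u := by
            rw [Finset.smul_sum]
            exact Finset.sum_congr rfl fun u _ => (smul_comm _ _ _)
          rw [h2, hφc, smul_zero, smul_zero]
        rw [this]
        simp
    exact le_antisymm (csInf_le hdeltaBdd h0delta) hδ0
end

section
/- If φ is an optimal solution of the embedding problem ν (centered, edge-length constrained, maximizing variance) and m₁ is an optimal solution of the eigenvalue maximization problem σ, and ν(G,m₀,d) = (D²/M)/σ(G,m₀,d), then each component of φ is an eigenfunction of Δ_{(m₀,m₁)} with eigenvalue λ₁(G,(m₀,m₁)) = σ(G,m₀,d). -/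
open Finset
open scoped Classical

open Matrix
open scoped RealInnerProductSpace
namespace Scratch
variable {V : Type*} [Fintype V] (G : SimpleGraph V) [DecidableRel G.Adj]

lemma dart_sum (F : V → V → ℝ) :
    ∑ d : G.Dart, F d.toProd.1 d.toProd.2 = ∑ u, ∑ v ∈ G.neighborFinset u, F u v := by
  classical
  rw [← Finset.sum_sigma (Finset.univ) (fun u => G.neighborFinset u) (fun p => F p.1 p.2)]
  refine (Finset.sum_bij' (i := fun (p : Σ _ : V, V) (hp : p ∈ _) => (⟨(p.1, p.2), by
      simpa using (Finset.mem_sigma.mp hp).2⟩ : G.Dart))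
    (j := fun (d : G.Dart) _ => (⟨d.fst, d.snd⟩ : Σ _ : V, V))
    ?_ ?_ ?_ ?_ ?_).symm <;> intro a ha <;> simp_all

lemma dart_sum_symm (F : V → V → ℝ) :
    ∑ d : G.Dart, F d.toProd.1 d.toProd.2 = ∑ d : G.Dart, F d.toProd.2 d.toProd.1 :=
  Fintype.sum_bijective _ (SimpleGraph.Dart.symm_involutive.bijective) _ _ (fun _ => rfl)

lemma dart_sum_edge (F : V → V → ℝ) (hF : ∀ u v, F u v = F v u) :
    ∑ d : G.Dart, F d.toProd.1 d.toProd.2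
      = 2 * ∑ e ∈ G.edgeFinset, Sym2.lift ⟨F, fun u v => (hF u v)⟩ e := by
  classical
  have hmaps : ∀ d : G.Dart, d ∈ (Finset.univ : Finset G.Dart) → d.edge ∈ G.edgeFinset :=
    fun d _ => by rw [SimpleGraph.mem_edgeFinset]; exact d.edge_mem
  rw [← Finset.sum_fiberwise_of_maps_to (t := G.edgeFinset)
    (f := fun d : G.Dart => F d.toProd.1 d.toProd.2) hmaps,
    Finset.mul_sum G.edgeFinset _ 2]
  refine Finset.sum_congr rfl fun e he => ?_
  rw [SimpleGraph.mem_edgeFinset] at he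
  induction e with
  | _ u v =>
    have hadj : G.Adj u v := he
    set d : G.Dart := ⟨(u, v), hadj⟩ with hd
    have hfib : (Finset.univ.filter fun d' : G.Dart => d'.edge = s(u, v))
        = ({d, d.symm} : Finset _) := by
      ext d'
      simp only [Finset.mem_filter, Finset.mem_univ, true_and, Finset.mem_insert,
        Finset.mem_singleton]
      exact SimpleGraph.dart_edge_eq_mk'_iff.trans (by
        constructor
        · rintro (h | h)
          · left; exact SimpleGraph.Dart.ext _ _ h
          · right; exact SimpleGraph.Dart.ext _ _ (by rw [h]; rfl)
        · rintro (rfl | rfl)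
          · left; rfl
          · right; rfl)
    rw [hfib, Finset.sum_insert (by simp only [Finset.mem_singleton]; exact d.symm_ne.symm),
      Finset.sum_singleton]
    simp only [Sym2.lift_mk]
    have h2 : F d.symm.toProd.1 d.symm.toProd.2 = F v u := rfl
    have h1 : F d.toProd.1 d.toProd.2 = F u v := rfl
    rw [h1, h2, hF v u]
    ring

lemma nbr_sum_edge (F : V → V → ℝ) (hF : ∀ u v, F u v = F v u) :
    ∑ u, ∑ v ∈ G.neighborFinset u, F u v
      = 2 * ∑ e ∈ G.edgeFinset, Sym2.lift ⟨F, fun u v => (hF u v)⟩ e := by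
  rw [← dart_sum, dart_sum_edge G F hF]


/-- combinatorial Laplacian matrix -/
noncomputable def Lmat (m1 : Sym2 V → ℝ) : Matrix V V ℝ := fun u v =>
  (if u = v then ∑ x ∈ G.neighborFinset u, m1 s(u, x) else 0)
    - (if G.Adj u v then m1 s(u, v) else 0)

variable (m1 : Sym2 V → ℝ)

lemma Lmat_symm (u v : V) : Lmat G m1 u v = Lmat G m1 v u := by
  unfold Lmat
  by_cases h : u = v
  · subst h; rfl
  · rw [if_neg h, if_neg (Ne.symm h)]
    by_cases ha : G.Adj u v
    · rw [if_pos ha, if_pos ha.symm, Sym2.eq_swap]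
    · rw [if_neg ha, if_neg (fun hc => ha hc.symm)]

lemma Lmat_mulVec (f : V → ℝ) (u : V) :
    (Lmat G m1 *ᵥ f) u = (∑ v ∈ G.neighborFinset u, m1 s(u, v)) * f u
      - ∑ v ∈ G.neighborFinset u, m1 s(u, v) * f v := by
  unfold Lmat Matrix.mulVec dotProduct
  simp only [sub_mul, Finset.sum_sub_distrib, ite_mul, zero_mul]
  congr 1
  · rw [Finset.sum_ite_eq (Finset.univ) u (fun v => (∑ x ∈ G.neighborFinset u, m1 s(u, x)) * f v)]
    simp
  · rw [← Finset.sum_filter]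
    congr 1
    ext v
    simp [SimpleGraph.mem_neighborFinset]

lemma Lmat_green (f : V → ℝ) :
    ∑ u, f u * (Lmat G m1 *ᵥ f) u = edgeSqS G m1 f := by
  have h1 : ∀ u, f u * (Lmat G m1 *ᵥ f) u
      = ∑ v ∈ G.neighborFinset u, m1 s(u, v) * (f u * (f u - f v)) := by
    intro u
    rw [Lmat_mulVec, Finset.sum_mul, ← Finset.sum_sub_distrib, Finset.mul_sum]
    refine Finset.sum_congr rfl fun v _ => by ring
  simp only [h1]
  set F : V → V → ℝ := fun u v => m1 s(u, v) * (f u * (f u - f v)) with hF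
  have hFsymm : ∀ u v : V, m1 s(u, v) * (f u - f v) ^ 2 = m1 s(v, u) * (f v - f u) ^ 2 := by
    intro u v; rw [Sym2.eq_swap]; ring
  have hcomb : ∀ u v : V, F u v + F v u = m1 s(u, v) * (f u - f v) ^ 2 := by
    intro u v; simp only [hF]; rw [Sym2.eq_swap]; ring
  have hswap : ∑ u, ∑ v ∈ G.neighborFinset u, F u v
      = ∑ u, ∑ v ∈ G.neighborFinset u, F v u := by
    rw [← dart_sum, ← dart_sum, dart_sum_symm]
  have htwo : (2 : ℝ) * ∑ u, ∑ v ∈ G.neighborFinset u, F u v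
      = 2 * ∑ e ∈ G.edgeFinset, Sym2.lift ⟨fun u v => m1 s(u, v) * (f u - f v) ^ 2, hFsymm⟩ e := by
    rw [← nbr_sum_edge G _ hFsymm]
    rw [two_mul]
    nth_rewrite 2 [hswap]
    rw [← Finset.sum_add_distrib]
    refine Finset.sum_congr rfl fun u _ => ?_
    rw [← Finset.sum_add_distrib]
    exact Finset.sum_congr rfl fun v _ => hcomb u v
  have hmain := mul_left_cancel₀ (two_ne_zero) htwo
  rw [hmain]
  unfold edgeSqS
  refine Finset.sum_congr rfl fun e _ => ?_
  refine Sym2.inductionOn e fun u v => ?_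
  simp only [Sym2.lift_mk]


noncomputable def wvec (m0 : V → ℝ) : V → ℝ := fun u => Real.sqrt (m0 u)

noncomputable def Bmat (m0 : V → ℝ) : Matrix V V ℝ := fun u v =>
  Lmat G m1 u v / (wvec m0 u * wvec m0 v)

variable (m0 : V → ℝ)

lemma wvec_pos (hm0 : ∀ u, 0 < m0 u) (u : V) : 0 < wvec m0 u := Real.sqrt_pos.mpr (hm0 u)

lemma wvec_sq (hm0 : ∀ u, 0 < m0 u) (u : V) : wvec m0 u * wvec m0 u = m0 u :=
  Real.mul_self_sqrt (hm0 u).le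

lemma Bmat_herm : (Bmat G m1 m0).IsHermitian := by
  ext u v
  simp only [Bmat, Matrix.conjTranspose_apply, star_trivial]
  rw [Lmat_symm, mul_comm]

lemma Bmat_mulVec (hm0 : ∀ u, 0 < m0 u) (g : V → ℝ) (u : V) :
    (Bmat G m1 m0 *ᵥ g) u
      = (1 / wvec m0 u) * (Lmat G m1 *ᵥ fun v => g v / wvec m0 v) u := by
  unfold Bmat Matrix.mulVec dotProduct
  rw [Finset.mul_sum]
  refine Finset.sum_congr rfl fun v _ => ?_
  have hv := (wvec_pos m0 hm0 v).ne'
  have hu := (wvec_pos m0 hm0 u).ne'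
  simp only []
  field_simp

lemma Bmat_mulVec_w (hm0 : ∀ u, 0 < m0 u) (g : V → ℝ) (u : V) (f : V → ℝ) (hg : ∀ u, g u = wvec m0 u * f u) :
    (Bmat G m1 m0 *ᵥ g) u = (1 / wvec m0 u) * (Lmat G m1 *ᵥ f) u := by
  rw [Bmat_mulVec G m1 m0 hm0]
  congr 1
  unfold Matrix.mulVec dotProduct
  refine Finset.sum_congr rfl fun v _ => ?_
  simp only []
  rw [hg v, mul_div_cancel_left₀ _ (wvec_pos m0 hm0 v).ne']

lemma lapl_eq_Lmat (f : V → ℝ) (u : V) :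
    lapl G m0 m1 f u = (1 / m0 u) * (Lmat G m1 *ᵥ f) u := by
  rw [lapl, Lmat_mulVec]

/-- correspondence between eigenvalues of `lapl` and of `Bmat`. -/
lemma eigen_iff (hm0 : ∀ u, 0 < m0 u) (mu : ℝ) :
    IsEigenval G m0 m1 mu ↔ ∃ g : V → ℝ, g ≠ 0 ∧ Bmat G m1 m0 *ᵥ g = mu • g := by
  constructor
  · rintro ⟨f, hf, heig⟩
    refine ⟨fun u => wvec m0 u * f u, ?_, ?_⟩
    · intro hc
      apply hf
      ext u
      have := congrFun hc u
      simp only [Pi.zero_apply] at this ⊢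
      exact (mul_eq_zero.mp this).resolve_left (wvec_pos m0 hm0 u).ne'
    · ext u
      rw [Bmat_mulVec_w G m1 m0 hm0 _ u f (fun _ => rfl)]
      have h1 : (Lmat G m1 *ᵥ f) u = m0 u * lapl G m0 m1 f u := by
        rw [lapl_eq_Lmat G m1 m0]
        field_simp [(hm0 u).ne']
      rw [h1, congrFun heig u]
      simp only [Pi.smul_apply, smul_eq_mul]
      rw [← wvec_sq m0 hm0 u]
      have hw := (wvec_pos m0 hm0 u).ne'
      field_simp
  · rintro ⟨g, hg, heig⟩
    refine ⟨fun u => g u / wvec m0 u, ?_, ?_⟩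
    · intro hc
      apply hg
      ext u
      have := congrFun hc u
      simp only [Pi.zero_apply, div_eq_zero_iff] at this
      exact this.resolve_right (wvec_pos m0 hm0 u).ne'
    · ext u
      rw [lapl_eq_Lmat G m1 m0]
      have h1 : (Bmat G m1 m0 *ᵥ g) u = (1 / wvec m0 u) * (Lmat G m1 *ᵥ fun v => g v / wvec m0 v) u :=
        Bmat_mulVec G m1 m0 hm0 g u
      rw [congrFun heig u] at h1
      simp only [Pi.smul_apply, smul_eq_mul] at h1
      have h2 : (Lmat G m1 *ᵥ fun v => g v / wvec m0 v) u = wvec m0 u * (mu * g u) := by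
        have hw := (wvec_pos m0 hm0 u).ne'
        field_simp at h1 ⊢
        linarith [h1]
      rw [h2, ← wvec_sq m0 hm0 u]
      have hw := (wvec_pos m0 hm0 u).ne'
      field_simp


lemma edgeSqS_nonneg (hm1 : ∀ e, 0 ≤ m1 e) (f : V → ℝ) : 0 ≤ edgeSqS G m1 f := by
  refine Finset.sum_nonneg fun e _ => ?_
  refine mul_nonneg (hm1 e) ?_
  refine Sym2.inductionOn e fun u v => ?_
  rw [Sym2.lift_mk]
  positivity

lemma ker_const (hm0 : ∀ u, 0 < m0 u) (hm1 : ∀ e, 0 ≤ m1 e)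
    (hconn : (posSub G m1).Connected) (f : V → ℝ) (hLf : Lmat G m1 *ᵥ f = 0) :
    ∀ u v, f u = f v := by
  have hE : edgeSqS G m1 f = 0 := by
    rw [← Lmat_green, hLf]
    simp
  have hterm : ∀ e ∈ G.edgeFinset,
      m1 e * Sym2.lift ⟨fun u v => (f u - f v) ^ 2, fun u v => by simp only []; ring⟩ e = 0 := by
    rw [edgeSqS] at hE
    refine (Finset.sum_eq_zero_iff_of_nonneg fun e _ => ?_).mp hE
    refine mul_nonneg (hm1 e) (Sym2.inductionOn e fun u v => by rw [Sym2.lift_mk]; positivity)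
  have hadj : ∀ u v, (posSub G m1).Adj u v → f u = f v := by
    intro u v huv
    rw [posSub, SimpleGraph.fromRel_adj] at huv
    obtain ⟨hne, h | h⟩ := huv
    · have he : s(u, v) ∈ G.edgeFinset := by
        rw [SimpleGraph.mem_edgeFinset, SimpleGraph.mem_edgeSet]; exact h.1
      have := hterm _ he
      rw [Sym2.lift_mk, mul_eq_zero] at this
      rcases this with h' | h'
      · exact absurd h' h.2.ne'
      · have := pow_eq_zero_iff (n := 2) (by norm_num) |>.mp h'
        linarith [sub_eq_zero.mp this]
    · have he : s(u, v) ∈ G.edgeFinset := by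
        rw [SimpleGraph.mem_edgeFinset, SimpleGraph.mem_edgeSet]; exact h.1.symm
      have hm : 0 < m1 s(u, v) := by rw [Sym2.eq_swap]; exact h.2
      have := hterm _ he
      rw [Sym2.lift_mk, mul_eq_zero] at this
      rcases this with h' | h'
      · exact absurd h' hm.ne'
      · have := pow_eq_zero_iff (n := 2) (by norm_num) |>.mp h'
        linarith [sub_eq_zero.mp this]
  intro u v
  have hr : (posSub G m1).Reachable u v := hconn.preconnected u v
  obtain ⟨p⟩ := hr
  induction p with
  | nil => rfl
  | cons h p ih => exact (hadj _ _ h).trans ih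


lemma key (hm0 : ∀ u, 0 < m0 u) (hm1 : ∀ e, 0 ≤ m1 e) (hconn : (posSub G m1).Connected)
    (lam : ℝ) (hlam : IsLambdaOne G m0 m1 lam) (f : V → ℝ) (hf : ∑ u, m0 u * f u = 0) :
    lam * ∑ u, m0 u * f u ^ 2 ≤ edgeSqS G m1 f ∧
    (edgeSqS G m1 f = lam * ∑ u, m0 u * f u ^ 2 → lapl G m0 m1 f = fun u => lam * f u) := by
  classical
  set w : V → ℝ := wvec m0 with hw
  have hwpos : ∀ u, 0 < w u := wvec_pos m0 hm0
  have hwsq : ∀ u, w u * w u = m0 u := wvec_sq m0 hm0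
  set B : Matrix V V ℝ := Bmat G m1 m0 with hBdef
  have hB : B.IsHermitian := Bmat_herm G m1 m0
  set g : EuclideanSpace ℝ V := WithLp.toLp 2 (fun u => w u * f u) with hg
  have hgu : ∀ u, g u = w u * f u := fun u => rfl
  set b := hB.eigenvectorBasis with hb
  set μ := hB.eigenvalues with hμ
  set c : V → ℝ := fun i => b.repr g i with hc
  have hinner : ∀ x y : EuclideanSpace ℝ V, ⟪x, y⟫ = ∑ u, x u * y u := fun x y => by
    simp [PiLp.inner_apply, RCLike.inner_apply, mul_comm]
  have hrepr : ∑ i, c i • b i = g := b.sum_repr g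
  -- B *ᵥ g pointwise via Lmat
  have hBgL : ∀ u, (B *ᵥ g) u = (1 / w u) * (Lmat G m1 *ᵥ f) u := fun u =>
    Bmat_mulVec_w G m1 m0 hm0 g u f hgu
  -- quadratic form equals Dirichlet energy
  have hQF : ⟪g, Matrix.toEuclideanLin B g⟫ = edgeSqS G m1 f := by
    rw [show Matrix.toEuclideanLin B g = WithLp.toLp 2 (B *ᵥ g) from rfl, hinner, ← Lmat_green G m1 f]
    simp only [WithLp.ofLp_toLp]
    refine Finset.sum_congr rfl fun u _ => ?_
    rw [hBgL u, hgu u]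
    have := (hwpos u).ne'
    field_simp
  -- norm equals weighted norm
  have hNorm : ⟪g, g⟫ = ∑ u, m0 u * f u ^ 2 := by
    rw [hinner]
    refine Finset.sum_congr rfl fun u _ => ?_
    rw [hgu u, ← hwsq u]; ring
  -- expansion of inner products in the eigenbasis
  have hexp : ∀ k : V → ℝ, ⟪g, ∑ i, k i • b i⟫ = ∑ i, c i * k i := by
    intro k
    rw [inner_sum]
    refine Finset.sum_congr rfl fun i _ => ?_
    rw [real_inner_smul_right, real_inner_comm, ← b.repr_apply_apply]
    exact mul_comm _ _
  -- T g in eigenbasis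
  have hTg : Matrix.toEuclideanLin B g = ∑ i, (μ i * c i) • b i := by
    conv_lhs => rw [← hrepr]
    rw [map_sum]
    refine Finset.sum_congr rfl fun i _ => ?_
    rw [_root_.map_smul]
    have hei : Matrix.toEuclideanLin B (b i) = μ i • b i := by
      have := hB.mulVec_eigenvectorBasis i
      ext u; exact congrFun this u
    rw [hei, smul_smul, mul_comm (c i)]
  -- zero eigenvalue coefficients vanish
  have hzero : ∀ i, μ i = 0 → c i = 0 := by
    intro i hμi
    set bi : V → ℝ := fun u => b i u with hbidef
    have hker : B *ᵥ bi = 0 := by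
      have h0 : B *ᵥ bi = μ i • bi := hB.mulVec_eigenvectorBasis i
      rw [hμi, zero_smul] at h0
      exact h0
    -- b i corresponds to an Lmat-harmonic function
    set q : V → ℝ := fun u => bi u / w u with hq
    have hLq : Lmat G m1 *ᵥ q = 0 := by
      funext u
      have h1 := Bmat_mulVec G m1 m0 hm0 bi u
      rw [congrFun hker u] at h1
      have hwne := (hwpos u).ne'
      have h2 : (Lmat G m1 *ᵥ q) u = 0 := by
        have := h1.symm
        rw [Pi.zero_apply] at this
        rcases mul_eq_zero.mp this with h' | h'
        · exact absurd h' (by simp [hwne]; exact hwne)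
        · exact h'
      rw [h2]; rfl
    have hconst := ker_const G m1 m0 hm0 hm1 hconn q hLq
    obtain ⟨u0⟩ := hconn.nonempty
    have hbi : ∀ u, bi u = q u0 * w u := by
      intro u
      have h1 : q u = q u0 := hconst u u0
      have h2 : bi u = q u * w u := (div_mul_cancel₀ (bi u) (hwpos u).ne').symm
      rw [h2, h1]
    have hci : c i = ∑ u, bi u * g u := by
      show b.repr g i = _
      rw [b.repr_apply_apply, hinner]
    rw [hci]
    have heach : ∀ u, bi u * g u = q u0 * (m0 u * f u) := by
      intro u; rw [hbi u, hgu u, ← hwsq u]; ring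
    simp only [heach]
    rw [← Finset.mul_sum, hf, mul_zero]
  have hge : ∀ i, μ i ≠ 0 → lam ≤ μ i := by
    intro i hμi
    refine hlam.2.2 (μ i) hμi ?_
    rw [eigen_iff G m1 m0 hm0]
    refine ⟨fun u => b i u, ?_, ?_⟩
    · intro h0; exact b.toBasis.ne_zero i (by ext u; exact congrFun h0 u)
    · have h0 : B *ᵥ (fun u => b i u) = μ i • (fun u => b i u) := hB.mulVec_eigenvectorBasis i
      funext u; exact congrFun h0 u
  have hQexp : edgeSqS G m1 f = ∑ i, μ i * c i ^ 2 := by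
    rw [← hQF, hTg, hexp]
    exact Finset.sum_congr rfl fun i _ => by ring
  have hNexp : (∑ u, m0 u * f u ^ 2) = ∑ i, c i ^ 2 := by
    rw [← hNorm]
    have h1 := hexp c
    rw [hrepr] at h1
    rw [h1]
    exact Finset.sum_congr rfl fun i _ => by ring
  have hperm : ∀ i, lam * c i ^ 2 ≤ μ i * c i ^ 2 := by
    intro i
    by_cases h : μ i = 0
    · rw [h, hzero i h]; simp
    · have := hge i h; nlinarith [sq_nonneg (c i)]
  constructor
  · rw [hQexp, hNexp, Finset.mul_sum]
    exact Finset.sum_le_sum fun i _ => hperm i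
  · intro hEq
    have hsum0 : ∑ i, (μ i * c i ^ 2 - lam * c i ^ 2) = 0 := by
      rw [Finset.sum_sub_distrib, ← hQexp, ← Finset.mul_sum, ← hNexp, hEq, sub_self]
    have hall : ∀ i ∈ Finset.univ, μ i * c i ^ 2 - lam * c i ^ 2 = (0 : ℝ) :=
      (Finset.sum_eq_zero_iff_of_nonneg (fun i _ => by linarith [hperm i])).mp hsum0
    have hmc : ∀ i, μ i * c i = lam * c i := by
      intro i
      by_cases h : c i = 0
      · rw [h, mul_zero, mul_zero]
      · have h2 := hall i (Finset.mem_univ i)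
        have h3 : (μ i - lam) * c i ^ 2 = 0 := by linarith
        have h4 : μ i - lam = 0 := by
          rcases mul_eq_zero.mp h3 with h' | h'
          · exact h'
          · exact absurd h' (pow_ne_zero 2 h)
        have : μ i = lam := by linarith
        rw [this]
    have hBg : Matrix.toEuclideanLin B g = lam • g := by
      rw [hTg]
      rw [show lam • g = lam • ∑ i, c i • b i from by rw [hrepr], Finset.smul_sum]
      refine Finset.sum_congr rfl fun i _ => ?_
      rw [smul_smul, hmc i]
    funext u
    have h1 := hBgL u
    have h1' : (B *ᵥ (g : V → ℝ)) u = lam * (w u * f u) := by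
      have := congrArg (fun x => x u) hBg
      exact this
    rw [h1'] at h1
    have hwne := (hwpos u).ne'
    have h2 : (Lmat G m1 *ᵥ f) u = lam * (m0 u * f u) := by
      rw [← hwsq u]
      field_simp at h1
      nlinarith [h1]
    rw [lapl_eq_Lmat G m1 m0 f u, h2]
    field_simp [(hm0 u).ne']
  

lemma lam_pos (hm0 : ∀ u, 0 < m0 u) (hm1 : ∀ e, 0 ≤ m1 e)
    (lam : ℝ) (hlam : IsLambdaOne G m0 m1 lam) : 0 < lam := by
  obtain ⟨f0, hf0ne, hf0eig⟩ := hlam.2.1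
  have hsum : lam * ∑ u, m0 u * f0 u ^ 2 = edgeSqS G m1 f0 := by
    rw [← Lmat_green G m1 f0, Finset.mul_sum]
    refine Finset.sum_congr rfl fun u _ => ?_
    have h1 : (Lmat G m1 *ᵥ f0) u = m0 u * lapl G m0 m1 f0 u := by
      rw [lapl_eq_Lmat G m1 m0]; field_simp [(hm0 u).ne']
    rw [h1, congrFun hf0eig u]; ring
  have hpos : 0 < ∑ u, m0 u * f0 u ^ 2 := by
    have hne : ∃ u, f0 u ≠ 0 := by
      by_contra hc; push_neg at hc; exact hf0ne (funext fun u => hc u)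
    obtain ⟨u0, hu0⟩ := hne
    refine Finset.sum_pos' (fun u _ => mul_nonneg (hm0 u).le (sq_nonneg _)) ⟨u0, Finset.mem_univ _, ?_⟩
    exact mul_pos (hm0 u0) (lt_of_le_of_ne (sq_nonneg _) (Ne.symm (pow_ne_zero 2 hu0)))
  have hEnn : 0 ≤ edgeSqS G m1 f0 := edgeSqS_nonneg G m1 hm1 f0
  have h0 : 0 ≤ lam * ∑ u, m0 u * f0 u ^ 2 := hsum ▸ hEnn
  rcases lt_or_gt_of_ne hlam.1 with h | h
  · nlinarith
  · exact h

end Scratch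

open Scratch in
/-- if `φ` is optimal for `ν`, `m₁` is optimal for `σ`, and
`ν = (D²/M)/σ`, then each component of `φ` is a `λ₁`-eigenfunction. -/
theorem optimal_embedding_is_eigenmap {V : Type*} [Fintype V] [Nonempty V]
    (G : SimpleGraph V) [DecidableRel G.Adj] (hG : G.Connected)
    (m0 : V → ℝ) (hm0 : ∀ u, 0 < m0 u)
    (d : Sym2 V → ℝ) (hd : ∀ e ∈ G.edgeSet, 0 < d e)
    (φ : V → EuclideanSpace ℝ (Fin (Fintype.card V)))
    (hcenter : (∑ u, m0 u • φ u) = 0)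
    (hshort : ∀ u v, G.Adj u v → ‖φ u - φ v‖ ≤ d s(u, v))
    (hphiopt : (1 / ∑ u, m0 u) * ∑ u, m0 u * ‖φ u‖ ^ 2 = sSup (nuSet G m0 d))
    (m1 : Sym2 V → ℝ) (hm1 : ∀ e, 0 ≤ m1 e) (hconn : (posSub G m1).Connected)
    (hnorm : ∑ e ∈ G.edgeFinset, m1 e * d e ^ 2 = ∑ e ∈ G.edgeFinset, d e ^ 2)
    (hm1opt : IsLambdaOne G m0 m1 (sSup (sigmaSet G m0 d)))
    (heq : sSup (nuSet G m0 d) =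
      ((∑ e ∈ G.edgeFinset, d e ^ 2) / (∑ u, m0 u)) / sSup (sigmaSet G m0 d)) :
    ∀ i, lapl G m0 m1 (fun u => φ u i) =
      fun u => sSup (sigmaSet G m0 d) * φ u i := by
  classical
  set lam := sSup (sigmaSet G m0 d) with hlamdef
  set M := ∑ u, m0 u with hMdef
  set D2 := ∑ e ∈ G.edgeFinset, d e ^ 2 with hD2def
  have hMpos : 0 < M := Finset.sum_pos (fun u _ => hm0 u) Finset.univ_nonempty
  have hlampos : 0 < lam := lam_pos G m1 m0 hm0 hm1 lam hm1opt
  set S := ∑ u, m0 u * ‖φ u‖ ^ 2 with hSdef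
  have hSD : lam * S = D2 := by
    have h1 : (1 / M) * S = (D2 / M) / lam := by rw [hphiopt, heq]
    have h2 : (1 / M) * S = (1 / M) * (D2 / lam) := by rw [h1]; ring
    have h3 : S = D2 / lam := mul_left_cancel₀ (one_div_ne_zero hMpos.ne') h2
    rw [h3]; field_simp
  intro i
  set f : Fin (Fintype.card V) → V → ℝ := fun j u => φ u j with hfdef
  have hcent : ∀ j, ∑ u, m0 u * f j u = 0 := fun j => by
    have h1 := congrArg (fun x => x j) hcenter
    rw [WithLp.ofLp_sum, Finset.sum_apply] at h1
    simpa using h1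
  have hkey := fun j => key G m1 m0 hm0 hm1 hconn lam hm1opt (f j) (hcent j)
  have hnormsum : ∀ x : EuclideanSpace ℝ (Fin (Fintype.card V)), ‖x‖ ^ 2 = ∑ j, x j ^ 2 := by
    intro x
    rw [EuclideanSpace.norm_eq, Real.sq_sqrt (by positivity)]
    simp [sq_abs]
  have hSsum : ∑ j, ∑ u, m0 u * f j u ^ 2 = S := by
    rw [Finset.sum_comm]
    refine Finset.sum_congr rfl fun u _ => ?_
    rw [hnormsum (φ u), Finset.mul_sum]
  have hEsum : ∑ j, edgeSqS G m1 (f j) ≤ D2 := by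
    have h1 : ∑ j, edgeSqS G m1 (f j) = ∑ e ∈ G.edgeFinset, m1 e *
        Sym2.lift ⟨fun u v => ‖φ u - φ v‖ ^ 2,
          fun u v => by simp only [norm_sub_rev (φ u) (φ v)]⟩ e := by
      unfold edgeSqS
      rw [Finset.sum_comm]
      refine Finset.sum_congr rfl fun e _ => ?_
      rw [← Finset.mul_sum]
      congr 1
      refine Sym2.inductionOn e fun u v => ?_
      simp only [Sym2.lift_mk]
      rw [hnormsum (φ u - φ v)]
      exact Finset.sum_congr rfl fun j _ => rfl
    rw [h1, ← hnorm]
    refine Finset.sum_le_sum fun e he => ?_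
    revert he
    refine Sym2.inductionOn e fun u v he => ?_
    have hadj : G.Adj u v := by rwa [SimpleGraph.mem_edgeFinset, SimpleGraph.mem_edgeSet] at he
    have hle := hshort u v hadj
    have hd0 : 0 < d s(u, v) := hd _ ((SimpleGraph.mem_edgeSet G).mpr hadj)
    rw [Sym2.lift_mk]
    refine mul_le_mul_of_nonneg_left ?_ (hm1 _)
    show ‖φ u - φ v‖ ^ 2 ≤ d s(u, v) ^ 2
    nlinarith [norm_nonneg (φ u - φ v)]
  have hlow : ∑ j, lam * ∑ u, m0 u * f j u ^ 2 ≤ ∑ j, edgeSqS G m1 (f j) :=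
    Finset.sum_le_sum fun j _ => (hkey j).1
  have hlhs : ∑ j, lam * ∑ u, m0 u * f j u ^ 2 = lam * S := by
    rw [← Finset.mul_sum, hSsum]
  have hzero : ∑ j, (edgeSqS G m1 (f j) - lam * ∑ u, m0 u * f j u ^ 2) = 0 := by
    rw [Finset.sum_sub_distrib]
    rw [hlhs] at hlow
    have h3 : ∑ j, edgeSqS G m1 (f j) ≤ lam * S := le_trans hEsum (le_of_eq hSD.symm)
    linarith
  have heach := (Finset.sum_eq_zero_iff_of_nonneg
    (fun j _ => by linarith [(hkey j).1])).mp hzero i (Finset.mem_univ i)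
  exact (hkey i).2 (by linarith)
end
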